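/- arXiv:1606.08431 — 7 statements merged into one kernel-verified Lean document; each statement's English description precedes it below -/
import Mathlib

section
/- Let G : EuclideanSpace ℝ (Fin n) → ℝ be continuously differentiable with gradient ∇G, let Δt > 0, and suppose y⁺, y ∈ EuclideanSpace ℝ (Fin n) satisfy the average vector field (AVF) step y⁺ = y − Δt · ∫_0^1 ∇G(τ·y⁺ + (1−τ)·y) dτ. Then G(y⁺) − G(y) = −(1/Δt)·‖y⁺ − y‖², and in particular G(y⁺) ≤ G(y). -/
open MeasureTheory
open scoped InnerProductSpace

/-- Unconditional energy decrease of the average vector field (AVF) method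
for the gradient system `ẏ = -∇G(y)`: if `y⁺ = y - Δt ∫_0^1 ∇G(τ y⁺ + (1-τ) y) dτ` with
`Δt > 0`, then `G y⁺ - G y = -(1/Δt) ‖y⁺ - y‖²`, so in particular `G y⁺ ≤ G y`. -/
theorem avf_energy_decrease {n : ℕ} (G : EuclideanSpace ℝ (Fin n) → ℝ)
    (G' : EuclideanSpace ℝ (Fin n) → EuclideanSpace ℝ (Fin n))
    (hG : ∀ x, HasGradientAt G (G' x) x) (hG' : Continuous G')
    (Δt : ℝ) (hΔt : 0 < Δt) (yp y : EuclideanSpace ℝ (Fin n))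
    (hstep : yp = y - Δt • ∫ τ in (0:ℝ)..1, G' (τ • yp + (1 - τ) • y)) :
    G yp - G y = -(1 / Δt) * ‖yp - y‖ ^ 2 ∧ G yp ≤ G y := by
  set v := yp - y with hv
  have hγcont : Continuous fun τ : ℝ => τ • yp + (1 - τ) • y := by
    apply Continuous.add
    · exact continuous_id.smul continuous_const
    · exact (continuous_const.sub continuous_id).smul continuous_const
  have hγ : ∀ τ : ℝ, HasDerivAt (fun τ : ℝ => τ • yp + (1 - τ) • y) v τ := by
    intro τ
    have h1 : HasDerivAt (fun τ : ℝ => τ • yp) yp τ := by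
      simpa using (hasDerivAt_id τ).smul_const yp
    have h2 : HasDerivAt (fun τ : ℝ => (1 - τ) • y) (-y) τ := by
      have h3 : HasDerivAt (fun τ : ℝ => (1 - τ)) (-1) τ := by
        exact (hasDerivAt_id' τ).const_sub (1:ℝ)
      simpa using h3.smul_const y
    exact (h1.add h2).congr_deriv (by rw [hv, sub_eq_add_neg])
  have hderiv : ∀ τ : ℝ, HasDerivAt (fun τ : ℝ => G (τ • yp + (1 - τ) • y))
      (⟪G' (τ • yp + (1 - τ) • y), v⟫_ℝ) τ := by
    intro τ
    have := ((hG (τ • yp + (1 - τ) • y)).hasFDerivAt).comp_hasDerivAt τ (hγ τ)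
    simpa [Function.comp_def] using this
  have hcont : Continuous fun τ : ℝ => G' (τ • yp + (1 - τ) • y) := hG'.comp hγcont
  have hcont2 : Continuous fun τ : ℝ => ⟪G' (τ • yp + (1 - τ) • y), v⟫_ℝ :=
    hcont.inner continuous_const
  have hint : ∫ τ in (0:ℝ)..1, ⟪G' (τ • yp + (1 - τ) • y), v⟫_ℝ = G yp - G y := by
    have := intervalIntegral.integral_eq_sub_of_hasDerivAt
      (f := fun τ : ℝ => G (τ • yp + (1 - τ) • y))
      (f' := fun τ : ℝ => ⟪G' (τ • yp + (1 - τ) • y), v⟫_ℝ)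
      (a := 0) (b := 1) (fun τ _ => hderiv τ) (hcont2.intervalIntegrable 0 1)
    simpa using this
  have hswap : ∫ τ in (0:ℝ)..1, ⟪G' (τ • yp + (1 - τ) • y), v⟫_ℝ
      = ⟪(∫ τ in (0:ℝ)..1, G' (τ • yp + (1 - τ) • y)), v⟫_ℝ := by
    have := (innerSL ℝ v).intervalIntegral_comp_comm
      (a := 0) (b := 1) (μ := volume) (hcont.intervalIntegrable 0 1)
    simp only [innerSL_apply_apply] at this
    calc ∫ τ in (0:ℝ)..1, ⟪G' (τ • yp + (1 - τ) • y), v⟫_ℝ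
        = ∫ τ in (0:ℝ)..1, ⟪v, G' (τ • yp + (1 - τ) • y)⟫_ℝ :=
          intervalIntegral.integral_congr fun τ _ => real_inner_comm _ _
      _ = ⟪v, (∫ τ in (0:ℝ)..1, G' (τ • yp + (1 - τ) • y))⟫_ℝ := this
      _ = ⟪(∫ τ in (0:ℝ)..1, G' (τ • yp + (1 - τ) • y)), v⟫_ℝ := real_inner_comm _ _
  have hI : (∫ τ in (0:ℝ)..1, G' (τ • yp + (1 - τ) • y)) = -(1 / Δt) • v := by
    have h0 : yp + Δt • (∫ τ in (0:ℝ)..1, G' (τ • yp + (1 - τ) • y)) = y :=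
      eq_sub_iff_add_eq.mp hstep
    have h1 : Δt • (∫ τ in (0:ℝ)..1, G' (τ • yp + (1 - τ) • y)) = -v := by
      rw [hv, neg_sub]; exact eq_sub_of_add_eq' h0
    have := congrArg (fun z => (1 / Δt) • z) h1
    simp only [smul_smul, one_div, inv_mul_cancel₀ hΔt.ne', one_smul] at this
    rw [this]; simp [neg_smul, one_div]
  have hmain : G yp - G y = -(1 / Δt) * ‖v‖ ^ 2 := by
    rw [← hint, hswap, hI]
    rw [real_inner_smul_left, real_inner_self_eq_norm_sq]
  refine ⟨hmain, ?_⟩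
  have : -(1 / Δt) * ‖v‖ ^ 2 ≤ 0 := by
    apply mul_nonpos_of_nonpos_of_nonneg
    · simp [le_of_lt hΔt]
    · positivity
  linarith [hmain]
end

section
/- Let M ∈ ℝ^{𝒩×𝒩} be a symmetric positive definite matrix, let A ∈ ℝ^{𝒩×𝒩} be symmetric, and let N : EuclideanSpace ℝ (Fin 𝒩) → ℝ be continuously differentiable with gradient f. Define the discrete energy E(u) = (1/2)·⟪u, A·u⟫ + N(u). Let Δt > 0 and suppose u⁺, u⁰ ∈ EuclideanSpace ℝ (Fin 𝒩) satisfy the SIPG–AVF fully discrete step M·(u⁺ − u⁰) + (Δt/2)·A·(u⁺ + u⁰) + Δt · ∫_0^1 f(τ·u⁺ + (1−τ)·u⁰) dτ = 0. Then E(u⁺) − E(u⁰) = −(1/Δt)·⟪u⁺ − u⁰, M·(u⁺ − u⁰)⟫, and in particular E(u⁺) ≤ E(u⁰) for any time step size Δt > 0. -/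
open MeasureTheory Matrix
open scoped InnerProductSpace

/-- Unconditional energy stability of the SIPG–AVF fully discrete
full order model: with mass matrix `M` (symmetric positive definite), symmetric stiffness
matrix `A`, nonlinear vector `f = ∇N`, and discrete energy `E u = (1/2)⟪u, Au⟫ + N u`,
one AVF step `M (u⁺ - u⁰) + (Δt/2) A (u⁺ + u⁰) + Δt ∫_0^1 f(τ u⁺ + (1-τ) u⁰) dτ = 0`
gives `E u⁺ - E u⁰ = -(1/Δt) ⟪u⁺ - u⁰, M (u⁺ - u⁰)⟫ ≤ 0`. -/
theorem sipg_avf_energy_stable {𝒩 : ℕ} (M A : Matrix (Fin 𝒩) (Fin 𝒩) ℝ)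
    (hM : M.PosDef) (hA : A.IsSymm)
    (N : EuclideanSpace ℝ (Fin 𝒩) → ℝ)
    (f : EuclideanSpace ℝ (Fin 𝒩) → EuclideanSpace ℝ (Fin 𝒩))
    (hN : ∀ u, HasGradientAt N (f u) u) (hf : Continuous f)
    (E : EuclideanSpace ℝ (Fin 𝒩) → ℝ)
    (hE : ∀ u : EuclideanSpace ℝ (Fin 𝒩),
      E u = (1 / 2) * ⟪u, Matrix.toEuclideanLin A u⟫_ℝ + N u)
    (Δt : ℝ) (hΔt : 0 < Δt) (up u0 : EuclideanSpace ℝ (Fin 𝒩))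
    (hstep : Matrix.toEuclideanLin M (up - u0)
        + (Δt / 2) • Matrix.toEuclideanLin A (up + u0)
        + Δt • (∫ τ in (0:ℝ)..1, f (τ • up + (1 - τ) • u0)) = 0) :
    E up - E u0
        = -(1 / Δt) * ⟪up - u0, Matrix.toEuclideanLin M (up - u0)⟫_ℝ
      ∧ E up ≤ E u0 := by
  set T := Matrix.toEuclideanLin A with hT
  set S := Matrix.toEuclideanLin M with hS
  set v : EuclideanSpace ℝ (Fin 𝒩) := up - u0 with hv
  set γ : ℝ → EuclideanSpace ℝ (Fin 𝒩) := fun τ => u0 + τ • v with hγ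
  have hγc : Continuous γ := by continuity
  have hpath : ∀ τ : ℝ, τ • up + (1 - τ) • u0 = γ τ := by
    intro τ
    simp only [hγ, hv, smul_sub, sub_smul, one_smul]
    abel
  -- symmetry of T
  have hTsymm : LinearMap.IsSymmetric T := by
    rw [hT, ← Matrix.isHermitian_iff_isSymmetric]
    exact hA
  -- positivity of S
  have hSpos : 0 ≤ ⟪v, S v⟫_ℝ := by
    have h := hM.posSemidef.dotProduct_mulVec_nonneg ((WithLp.equiv 2 _) v)
    rw [hS, Matrix.toEuclideanLin_apply, PiLp.inner_apply]
    simp only [RCLike.inner_apply, conj_trivial] at *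
    simpa [dotProduct, mul_comm] using h
  -- FTC for N along the segment
  have hFTC : N up - N u0 = ∫ τ in (0:ℝ)..1, ⟪f (γ τ), v⟫_ℝ := by
    have hderiv : ∀ τ ∈ Set.uIcc (0:ℝ) 1,
        HasDerivAt (fun t => N (γ t)) ⟪f (γ τ), v⟫_ℝ τ := by
      intro τ _
      have h1 : HasDerivAt γ v τ := by
        have h0 := ((hasDerivAt_id τ).smul_const v).const_add u0
        rw [one_smul] at h0
        exact h0
      have h2 := (hN (γ τ)).hasFDerivAt.comp_hasDerivAt τ h1
      have h3 : HasDerivAt (N ∘ γ) ⟪f (γ τ), v⟫_ℝ τ := by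
        simpa [InnerProductSpace.toDual_apply_apply] using h2
      exact h3
    have hint : IntervalIntegrable (fun τ => ⟪f (γ τ), v⟫_ℝ) volume 0 1 :=
      (Continuous.inner (hf.comp hγc) continuous_const).intervalIntegrable 0 1
    have := intervalIntegral.integral_eq_sub_of_hasDerivAt hderiv hint
    simp only [hγ] at this
    rw [this, one_smul, zero_smul, add_zero, hv, add_sub_cancel]
  -- the integral term
  set I : EuclideanSpace ℝ (Fin 𝒩) := ∫ τ in (0:ℝ)..1, f (τ • up + (1 - τ) • u0) with hI
  have hIint : IntervalIntegrable (fun τ => f (γ τ)) volume 0 1 :=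
    (hf.comp hγc).intervalIntegrable 0 1
  have hinnerI : ⟪v, I⟫_ℝ = ∫ τ in (0:ℝ)..1, ⟪f (γ τ), v⟫_ℝ := by
    have := (innerSL ℝ v).intervalIntegral_comp_comm hIint
    simp only [innerSL_apply_apply] at this
    rw [hI]
    simp_rw [hpath]
    rw [← this]
    congr 1
    · exact funext fun τ => real_inner_comm _ _
  -- inner product of the step equation with v
  have hkey : ⟪v, S v⟫_ℝ + (Δt / 2) * ⟪v, T (up + u0)⟫_ℝ + Δt * ⟪v, I⟫_ℝ = 0 := by
    have := congrArg (fun w => ⟪v, w⟫_ℝ) hstep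
    simp only [inner_add_right, real_inner_smul_right, inner_zero_right] at this
    exact this
  -- quadratic identity
  have hquad : ⟪up, T up⟫_ℝ - ⟪u0, T u0⟫_ℝ = ⟪v, T (up + u0)⟫_ℝ := by
    rw [hv]
    have h1 : ⟪up, T u0⟫_ℝ = ⟪u0, T up⟫_ℝ := by
      rw [← hTsymm up u0, real_inner_comm]
    simp only [inner_sub_left, map_add, inner_add_right]
    linarith
  have hIv : ⟪v, I⟫_ℝ = N up - N u0 := by rw [hinnerI, hFTC]
  have heq : E up - E u0 = -(1 / Δt) * ⟪v, S v⟫_ℝ := by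
    rw [hE up, hE u0]
    set x := ⟪v, T (up + u0)⟫_ℝ with hx
    set y := ⟪v, I⟫_ℝ with hy
    set z := ⟪v, S v⟫_ℝ with hz
    have hfrac : (1/2 : ℝ) * x + y = -(1/Δt) * z := by
      have hΔ : Δt ≠ 0 := ne_of_gt hΔt
      field_simp
      linarith [hkey]
    linarith [hquad, hIv, hfrac]
  exact ⟨heq, by
    have h1 : 0 ≤ (1 / Δt) * ⟪v, S v⟫_ℝ :=
      mul_nonneg (le_of_lt (one_div_pos.mpr hΔt)) hSpos
    linarith [heq]⟩
end

section
/- Let M ∈ ℝ^{𝒩×𝒩} be symmetric positive definite, A ∈ ℝ^{𝒩×𝒩} symmetric, N : EuclideanSpace ℝ (Fin 𝒩) → ℝ continuously differentiable with gradient f, and E(u) = (1/2)·⟪u, A·u⟫ + N(u). Let Δt > 0 and let (uⁿ)_{n=0}^{J} be a sequence in EuclideanSpace ℝ (Fin 𝒩) satisfying, for every n < J, the SIPG–AVF step M·(u^{n+1} − uⁿ) + (Δt/2)·A·(u^{n+1} + uⁿ) + Δt·∫_0^1 f(τ·u^{n+1} + (1−τ)·uⁿ) dτ = 0. Then the discrete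 energy sequence is nonincreasing: E(uⁿ) ≤ E(uᵐ) for all m ≤ n ≤ J. -/
open MeasureTheory Matrix
open scoped InnerProductSpace

/-- The discrete energy sequence of the SIPG–AVF full order model is
nonincreasing: if `(uⁿ)ₙ` satisfies, for every `n < J`, the AVF step
`M (u^{n+1} - uⁿ) + (Δt/2) A (u^{n+1} + uⁿ) + Δt ∫_0^1 f(τ u^{n+1} + (1-τ) uⁿ) dτ = 0`,
then `E (uⁿ) ≤ E (uᵐ)` for all `m ≤ n ≤ J`, where `E u = (1/2)⟪u, Au⟫ + N u` and `f = ∇N`. -/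
theorem sipg_avf_energy_nonincreasing {𝒩 : ℕ} (M A : Matrix (Fin 𝒩) (Fin 𝒩) ℝ)
    (hM : M.PosDef) (hA : A.IsSymm)
    (N : EuclideanSpace ℝ (Fin 𝒩) → ℝ)
    (f : EuclideanSpace ℝ (Fin 𝒩) → EuclideanSpace ℝ (Fin 𝒩))
    (hN : ∀ u, HasGradientAt N (f u) u) (hf : Continuous f)
    (E : EuclideanSpace ℝ (Fin 𝒩) → ℝ)
    (hE : ∀ u : EuclideanSpace ℝ (Fin 𝒩),
      E u = (1 / 2) * ⟪u, Matrix.toEuclideanLin A u⟫_ℝ + N u)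
    (Δt : ℝ) (hΔt : 0 < Δt) (J : ℕ) (u : ℕ → EuclideanSpace ℝ (Fin 𝒩))
    (hstep : ∀ n < J, Matrix.toEuclideanLin M (u (n + 1) - u n)
        + (Δt / 2) • Matrix.toEuclideanLin A (u (n + 1) + u n)
        + Δt • (∫ τ in (0:ℝ)..1, f (τ • u (n + 1) + (1 - τ) • u n)) = 0) :
    ∀ m n : ℕ, m ≤ n → n ≤ J → E (u n) ≤ E (u m) := by
  -- symmetry of A as a linear map
  have hAh : A.IsHermitian := by
    ext i j
    simp only [conjTranspose_apply, star_trivial]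
    exact congrFun (congrFun hA i) j
  have hAsym : (Matrix.toEuclideanLin A).IsSymmetric :=
    Matrix.isHermitian_iff_isSymmetric.mp hAh
  -- positivity of M
  have hMpos : ∀ x : EuclideanSpace ℝ (Fin 𝒩), 0 ≤ ⟪x, Matrix.toEuclideanLin M x⟫_ℝ := by
    intro x
    have := hM.posSemidef.dotProduct_mulVec_nonneg (WithLp.equiv 2 _ x)
    simpa [EuclideanSpace.inner_eq_star_dotProduct, star_trivial, dotProduct_comm] using this
  have key : ∀ n < J, E (u (n + 1)) ≤ E (u n) := by
    intro n hn
    set v := u (n + 1) with hv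
    set w := u n with hw
    set d : EuclideanSpace ℝ (Fin 𝒩) := v - w with hd
    -- path
    set p : ℝ → EuclideanSpace ℝ (Fin 𝒩) := fun τ => τ • v + (1 - τ) • w with hp
    have hpc : Continuous p := by fun_prop
    have hfc : Continuous fun τ => f (p τ) := hf.comp hpc
    have hfint : IntervalIntegrable (fun τ => f (p τ)) volume 0 1 :=
      hfc.intervalIntegrable 0 1
    have hpderiv : ∀ τ : ℝ, HasDerivAt p d τ := by
      intro τ
      have h1 : HasDerivAt (fun τ : ℝ => τ • v) v τ := by
        simpa using (hasDerivAt_id τ).smul_const v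
      have h2 : HasDerivAt (fun τ : ℝ => (1 - τ) • w) (-w) τ := by
        simpa using ((hasDerivAt_id τ).const_sub 1).smul_const w
      rw [hd, sub_eq_add_neg]; exact h1.add h2
    have hgderiv : ∀ τ : ℝ, HasDerivAt (fun τ => N (p τ)) ⟪f (p τ), d⟫_ℝ τ := by
      intro τ
      have := (hN (p τ)).hasFDerivAt.comp_hasDerivAt τ (hpderiv τ)
      simpa [InnerProductSpace.toDual_apply_apply, Function.comp_def] using this
    have hgint : IntervalIntegrable (fun τ => ⟪f (p τ), d⟫_ℝ) volume 0 1 := by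
      apply Continuous.intervalIntegrable
      exact (continuous_inner.comp (hfc.prodMk continuous_const))
    have hftc : ∫ τ in (0:ℝ)..1, ⟪f (p τ), d⟫_ℝ = N v - N w := by
      have := intervalIntegral.integral_eq_sub_of_hasDerivAt
        (f := fun τ => N (p τ)) (f' := fun τ => ⟪f (p τ), d⟫_ℝ)
        (fun τ _ => hgderiv τ) hgint
      simpa [hp] using this
    -- inner product of integral
    have hinner_int : ⟪d, ∫ τ in (0:ℝ)..1, f (p τ)⟫_ℝ = N v - N w := by
      have hcomm := (innerSL ℝ d).intervalIntegral_comp_comm hfint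
      calc ⟪d, ∫ τ in (0:ℝ)..1, f (p τ)⟫_ℝ
          = ∫ τ in (0:ℝ)..1, ⟪d, f (p τ)⟫_ℝ := hcomm.symm
        _ = ∫ τ in (0:ℝ)..1, ⟪f (p τ), d⟫_ℝ := by simp_rw [real_inner_comm]
        _ = N v - N w := hftc
    -- inner product of step equation with d
    have h0 := congrArg (fun x => ⟪d, x⟫_ℝ) (hstep n hn)
    simp only [inner_add_right, inner_smul_right, inner_zero_right] at h0
    -- A-term
    have hAterm : ⟪d, Matrix.toEuclideanLin A (v + w)⟫_ℝ
        = ⟪v, Matrix.toEuclideanLin A v⟫_ℝ - ⟪w, Matrix.toEuclideanLin A w⟫_ℝ := by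
      have hx : ⟪v, Matrix.toEuclideanLin A w⟫_ℝ = ⟪w, Matrix.toEuclideanLin A v⟫_ℝ := by
        rw [← hAsym v w]; exact real_inner_comm _ _
      simp only [hd, map_add, inner_add_right, inner_sub_left]
      rw [hx]; ring
    rw [hAterm, hinner_int] at h0
    -- conclude
    have hEv : Δt * (E v - E w) = -⟪d, Matrix.toEuclideanLin M d⟫_ℝ := by
      rw [hE v, hE w]; nlinarith [h0]
    have : Δt * (E v - E w) ≤ 0 := by
      rw [hEv]; linarith [hMpos d]
    nlinarith
  intro m n hmn hnJ
  induction n, hmn using Nat.le_induction with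
  | base => exact le_refl _
  | succ n hmn ih =>
    exact le_trans (key n (lt_of_lt_of_le (Nat.lt_succ_self n) hnJ)) (ih (le_trans (Nat.le_succ n) hnJ))
end

section
/- Let A ∈ ℝ^{𝒩×𝒩} be symmetric, N : EuclideanSpace ℝ (Fin 𝒩) → ℝ continuously differentiable with gradient f, and E(u) = (1/2)·⟪u, A·u⟫ + N(u). Let Ψ ∈ ℝ^{𝒩×N} be any matrix and set A_r = Ψᵀ A Ψ. Let Δt > 0 and suppose the reduced coefficient vectors u_r⁺, u_r⁰ ∈ EuclideanSpace ℝ (Fin N) satisfy the reduced AVF step (u_r⁺ − u_r⁰) + (Δt/2)·A_r·(u_r⁺ + u_r⁰) + Δt·∫_0^1 Ψᵀ f(Ψ·(τ·u_r⁺ + (1−τ)·u_r⁰)) dτ = 0. Then E(Ψ·u_r⁺) − E(Ψ·u_r⁰) = −(1/Δt)·‖u_r⁺ − u_r⁰‖², and in particular E(Ψ·u_r⁺) ≤ E(Ψ·u_r⁰). -/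
open MeasureTheory Matrix
open scoped InnerProductSpace

private lemma transpose_inner_aux {m n : ℕ} (M : Matrix (Fin m) (Fin n) ℝ)
    (x : EuclideanSpace ℝ (Fin n)) (y : EuclideanSpace ℝ (Fin m)) :
    ⟪Matrix.toEuclideanLin M x, y⟫_ℝ = ⟪x, Matrix.toEuclideanLin Mᵀ y⟫_ℝ := by
  have h : Mᵀ = Mᴴ := (Matrix.conjTranspose_eq_transpose_of_trivial M).symm
  rw [h, Matrix.toEuclideanLin_conjTranspose_eq_adjoint, LinearMap.adjoint_inner_right]

private lemma toEuclideanLin_mul_aux {m n k : ℕ} (M : Matrix (Fin m) (Fin n) ℝ)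
    (P : Matrix (Fin n) (Fin k) ℝ) (x : EuclideanSpace ℝ (Fin k)) :
    Matrix.toEuclideanLin (M * P) x = Matrix.toEuclideanLin M (Matrix.toEuclideanLin P x) := by
  simp [Matrix.toEuclideanLin_apply, Matrix.mulVec_mulVec]

/-- Unconditional energy stability of the Galerkin (POD) reduced order
model discretized in time by the AVF method: with symmetric stiffness matrix `A`, discrete
energy `E u = (1/2)⟪u, Au⟫ + N u` with `f = ∇N`, any basis matrix `Ψ`, reduced stiffness
matrix `A_r = Ψᵀ A Ψ`, and reduced AVF step
`(u_r⁺ - u_r⁰) + (Δt/2) A_r (u_r⁺ + u_r⁰) + Δt ∫_0^1 Ψᵀ f(Ψ(τ u_r⁺ + (1-τ) u_r⁰)) dτ = 0`,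
one has `E (Ψ u_r⁺) - E (Ψ u_r⁰) = -(1/Δt) ‖u_r⁺ - u_r⁰‖²`, so `E (Ψ u_r⁺) ≤ E (Ψ u_r⁰)`. -/
theorem rom_avf_energy_stable {𝒩 Nr : ℕ} (A : Matrix (Fin 𝒩) (Fin 𝒩) ℝ) (hA : A.IsSymm)
    (N : EuclideanSpace ℝ (Fin 𝒩) → ℝ)
    (f : EuclideanSpace ℝ (Fin 𝒩) → EuclideanSpace ℝ (Fin 𝒩))
    (hN : ∀ u, HasGradientAt N (f u) u) (hf : Continuous f)
    (E : EuclideanSpace ℝ (Fin 𝒩) → ℝ)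
    (hE : ∀ u : EuclideanSpace ℝ (Fin 𝒩),
      E u = (1 / 2) * ⟪u, Matrix.toEuclideanLin A u⟫_ℝ + N u)
    (Ψ : Matrix (Fin 𝒩) (Fin Nr) ℝ) (Ar : Matrix (Fin Nr) (Fin Nr) ℝ)
    (hAr : Ar = Ψᵀ * A * Ψ)
    (Δt : ℝ) (hΔt : 0 < Δt) (urp ur0 : EuclideanSpace ℝ (Fin Nr))
    (hstep : (urp - ur0) + (Δt / 2) • Matrix.toEuclideanLin Ar (urp + ur0)
        + Δt • (∫ τ in (0:ℝ)..1,
            Matrix.toEuclideanLin Ψᵀ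
              (f (Matrix.toEuclideanLin Ψ (τ • urp + (1 - τ) • ur0)))) = 0) :
    E (Matrix.toEuclideanLin Ψ urp) - E (Matrix.toEuclideanLin Ψ ur0)
        = -(1 / Δt) * ‖urp - ur0‖ ^ 2
      ∧ E (Matrix.toEuclideanLin Ψ urp) ≤ E (Matrix.toEuclideanLin Ψ ur0) := by
  classical
  set L : EuclideanSpace ℝ (Fin Nr) →ₗ[ℝ] EuclideanSpace ℝ (Fin 𝒩) :=
    (Matrix.toEuclideanLin Ψ : _ →ₗ[ℝ] _) with hL
  have hLcont : Continuous L := L.continuous_of_finiteDimensional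
  set d : EuclideanSpace ℝ (Fin Nr) := urp - ur0 with hd
  set s : EuclideanSpace ℝ (Fin Nr) := urp + ur0 with hs
  -- symmetry of A
  have hsym : ∀ a b : EuclideanSpace ℝ (Fin 𝒩),
      ⟪a, Matrix.toEuclideanLin A b⟫_ℝ = ⟪b, Matrix.toEuclideanLin A a⟫_ℝ := by
    intro a b
    rw [real_inner_comm, transpose_inner_aux, hA.eq]
  -- path and its image
  set p : ℝ → EuclideanSpace ℝ (Fin 𝒩) := fun τ => L (ur0 + τ • d) with hp
  have hpath : ∀ τ : ℝ, τ • urp + (1 - τ) • ur0 = ur0 + τ • d := by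
    intro τ; rw [hd]; module
  have hp1 : p 1 = L urp := by simp [hp, hd]
  have hp0 : p 0 = L ur0 := by simp [hp]
  have hpc : Continuous p := by
    apply hLcont.comp
    exact continuous_const.add (continuous_id.smul continuous_const)
  -- derivative of N along path
  have hderiv : ∀ τ : ℝ, HasDerivAt (fun t => N (p t)) ⟪f (p τ), L d⟫_ℝ τ := by
    intro τ
    have hpd : HasDerivAt p (L d) τ := by
      have h1 : HasDerivAt (fun t : ℝ => ur0 + t • d) d τ := by
        simpa using ((hasDerivAt_id τ).smul_const d).const_add ur0
      exact ((LinearMap.toContinuousLinearMap L).hasFDerivAt.comp_hasDerivAt τ h1)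
    have hF : HasFDerivAt N (InnerProductSpace.toDual ℝ _ (f (p τ))) (p τ) :=
      (hasGradientAt_iff_hasFDerivAt.mp (hN (p τ)))
    have := hF.comp_hasDerivAt τ hpd
    simpa [InnerProductSpace.toDual_apply_apply, Function.comp_def] using this
  have hcont : Continuous fun τ => ⟪f (p τ), L d⟫_ℝ :=
    Continuous.inner (hf.comp hpc) continuous_const
  have hFTC : ∫ τ in (0:ℝ)..1, ⟪f (p τ), L d⟫_ℝ = N (L urp) - N (L ur0) := by
    rw [← hp1, ← hp0]
    exact intervalIntegral.integral_eq_sub_of_hasDerivAt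
      (fun τ _ => hderiv τ) (hcont.intervalIntegrable 0 1)
  -- convert integrand
  set LT : EuclideanSpace ℝ (Fin 𝒩) →ₗ[ℝ] EuclideanSpace ℝ (Fin Nr) :=
    (Matrix.toEuclideanLin Ψᵀ : _ →ₗ[ℝ] _) with hLT
  have hLTcont : Continuous LT := LT.continuous_of_finiteDimensional
  set I : EuclideanSpace ℝ (Fin Nr) :=
    ∫ τ in (0:ℝ)..1, Matrix.toEuclideanLin Ψᵀ
      (f (Matrix.toEuclideanLin Ψ (τ • urp + (1 - τ) • ur0))) with hI
  have hIeq : I = ∫ τ in (0:ℝ)..1, LT (f (p τ)) := by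
    rw [hI]
    congr 1
    funext τ
    rw [hpath τ]
  have hint : ⟪d, I⟫_ℝ = N (L urp) - N (L ur0) := by
    rw [hIeq]
    have hInt : IntervalIntegrable (fun τ => LT (f (p τ))) volume 0 1 :=
      ((hLTcont.comp (hf.comp hpc)).intervalIntegrable 0 1)
    have h3 : ⟪d, ∫ τ in (0:ℝ)..1, LT (f (p τ))⟫_ℝ
        = ∫ τ in (0:ℝ)..1, ⟪d, LT (f (p τ))⟫_ℝ := by
      simpa only [innerSL_apply_apply] using ((innerSL ℝ d).intervalIntegral_comp_comm hInt).symm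
    rw [h3, ← hFTC]
    congr 1
    funext τ
    exact ((transpose_inner_aux Ψ d (f (p τ))).symm.trans (real_inner_comm _ _))
  -- quadratic part
  have hquad : (1/2) * ⟪L urp, Matrix.toEuclideanLin A (L urp)⟫_ℝ
      - (1/2) * ⟪L ur0, Matrix.toEuclideanLin A (L ur0)⟫_ℝ
      = (1/2) * ⟪d, Matrix.toEuclideanLin Ar s⟫_ℝ := by
    have hArs : Matrix.toEuclideanLin Ar s
        = LT (Matrix.toEuclideanLin A (L s)) := by
      rw [hAr, toEuclideanLin_mul_aux, toEuclideanLin_mul_aux]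
    have h1 : ⟪d, Matrix.toEuclideanLin Ar s⟫_ℝ
        = ⟪L d, Matrix.toEuclideanLin A (L s)⟫_ℝ := by
      rw [hArs, hL, hLT]
      exact (transpose_inner_aux Ψ d (Matrix.toEuclideanLin A (Matrix.toEuclideanLin Ψ s))).symm
    have hLd : L d = L urp - L ur0 := by rw [hd]; exact map_sub L _ _
    have hLs : L s = L urp + L ur0 := by rw [hs]; exact map_add L _ _
    rw [h1, hLd, hLs, map_add, inner_sub_left, inner_add_right, inner_add_right,
      hsym (L urp) (L ur0)]
    ring
  -- the step relation
  have hstep' : ((1:ℝ)/2) • Matrix.toEuclideanLin Ar s + I = (-(1/Δt)) • d := by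
    have hne : Δt ≠ 0 := ne_of_gt hΔt
    have h1 : Δt • (((1:ℝ)/2) • Matrix.toEuclideanLin Ar s + I) = -d := by
      rw [smul_add, smul_smul]
      rw [show Δt * (1/2) = Δt / 2 from by ring]
      linear_combination (norm := module) hstep
    have h2 := congrArg (fun v => (Δt⁻¹ : ℝ) • v) h1
    simp only [smul_smul, inv_mul_cancel₀ hne, one_smul] at h2
    rw [h2]
    simp [one_div, neg_smul, smul_neg]
  -- combine
  have hmain : E (L urp) - E (L ur0) = -(1/Δt) * ‖d‖^2 := by
    rw [hE (L urp), hE (L ur0)]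
    have : (1/2) * ⟪L urp, Matrix.toEuclideanLin A (L urp)⟫_ℝ + N (L urp)
        - ((1/2) * ⟪L ur0, Matrix.toEuclideanLin A (L ur0)⟫_ℝ + N (L ur0))
        = ((1/2) * ⟪L urp, Matrix.toEuclideanLin A (L urp)⟫_ℝ
            - (1/2) * ⟪L ur0, Matrix.toEuclideanLin A (L ur0)⟫_ℝ)
          + (N (L urp) - N (L ur0)) := by ring
    rw [this, hquad, ← hint]
    have h2 : (1/2) * ⟪d, Matrix.toEuclideanLin Ar s⟫_ℝ + ⟪d, I⟫_ℝ
        = ⟪d, ((1:ℝ)/2) • Matrix.toEuclideanLin Ar s + I⟫_ℝ := by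
      rw [inner_add_right, real_inner_smul_right]
    rw [h2, hstep', real_inner_smul_right, real_inner_self_eq_norm_sq]
  constructor
  · exact hmain
  · have hnn : -(1/Δt) * ‖d‖^2 ≤ 0 := by
      apply mul_nonpos_of_nonpos_of_nonneg
      · simp [le_of_lt hΔt]
      · positivity
    linarith [hmain]
end

section
/- Let A ∈ ℝ^{𝒩×𝒩} be symmetric, N : EuclideanSpace ℝ (Fin 𝒩) → ℝ continuously differentiable with gradient f, E(u) = (1/2)·⟪u, A·u⟫ + N(u), Ψ ∈ ℝ^{𝒩×N}, A_r = Ψᵀ A Ψ, and let ĝ : EuclideanSpace ℝ (Fin 𝒩) → EuclideanSpace ℝ (Fin 𝒩) be continuous. Let Δt > 0 and suppose u_r⁺, u_r⁰ ∈ EuclideanSpace ℝ (Fin N) satisfy the DEIM-reduced AVF step (u_r⁺ − u_r⁰) + (Δt/2)·A_r·(u_r⁺ + u_r⁰) + Δt·∫_0^1 Ψᵀ ĝ(Ψ·z(τ)) dτ = 0, where z(τ) = τ·u_r⁺ + (1−τ)·u_r⁰. Then E(Ψ·u_r⁺) − E(Ψ·u_r⁰) = −(1/Δt)·‖u_r⁺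 − u_r⁰‖² + ∫_0^1 ⟪Ψ·(u_r⁺ − u_r⁰), f(Ψ·z(τ)) − ĝ(Ψ·z(τ))⟫ dτ. -/
open MeasureTheory Matrix
open scoped InnerProductSpace

lemma toEuclideanLin_mul' {a b c : ℕ} (M : Matrix (Fin a) (Fin b) ℝ)
    (P : Matrix (Fin b) (Fin c) ℝ) (v : EuclideanSpace ℝ (Fin c)) :
    Matrix.toEuclideanLin (M * P) v
      = Matrix.toEuclideanLin M (Matrix.toEuclideanLin P v) := by
  simp [Matrix.toEuclideanLin_apply, Matrix.mulVec_mulVec]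

lemma transpose_adjoint' {a b : ℕ} (M : Matrix (Fin a) (Fin b) ℝ)
    (v : EuclideanSpace ℝ (Fin b)) (w : EuclideanSpace ℝ (Fin a)) :
    ⟪v, Matrix.toEuclideanLin Mᵀ w⟫_ℝ = ⟪Matrix.toEuclideanLin M v, w⟫_ℝ := by
  rw [← Matrix.conjTranspose_eq_transpose_of_trivial,
    Matrix.toEuclideanLin_conjTranspose_eq_adjoint, LinearMap.adjoint_inner_right]


/-- Energy change of one AVF step of the DEIM reduced order model,
where the exact nonlinear vector `f = ∇N` is replaced in the scheme by the DEIM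
approximation `ĝ`: for the step
`(u_r⁺ - u_r⁰) + (Δt/2) A_r (u_r⁺ + u_r⁰) + Δt ∫_0^1 Ψᵀ ĝ(Ψ z(τ)) dτ = 0`
with `z(τ) = τ u_r⁺ + (1-τ) u_r⁰`, one has
`E (Ψ u_r⁺) - E (Ψ u_r⁰) = -(1/Δt) ‖u_r⁺ - u_r⁰‖²
  + ∫_0^1 ⟪Ψ (u_r⁺ - u_r⁰), f(Ψ z(τ)) - ĝ(Ψ z(τ))⟫ dτ`. -/
theorem deim_rom_avf_energy_identity {𝒩 Nr : ℕ}
    (A : Matrix (Fin 𝒩) (Fin 𝒩) ℝ) (hA : A.IsSymm)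
    (N : EuclideanSpace ℝ (Fin 𝒩) → ℝ)
    (f : EuclideanSpace ℝ (Fin 𝒩) → EuclideanSpace ℝ (Fin 𝒩))
    (hN : ∀ u, HasGradientAt N (f u) u) (hf : Continuous f)
    (E : EuclideanSpace ℝ (Fin 𝒩) → ℝ)
    (hE : ∀ u : EuclideanSpace ℝ (Fin 𝒩),
      E u = (1 / 2) * ⟪u, Matrix.toEuclideanLin A u⟫_ℝ + N u)
    (Ψ : Matrix (Fin 𝒩) (Fin Nr) ℝ) (Ar : Matrix (Fin Nr) (Fin Nr) ℝ)
    (hAr : Ar = Ψᵀ * A * Ψ)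
    (g : EuclideanSpace ℝ (Fin 𝒩) → EuclideanSpace ℝ (Fin 𝒩)) (hg : Continuous g)
    (Δt : ℝ) (hΔt : 0 < Δt) (urp ur0 : EuclideanSpace ℝ (Fin Nr))
    (z : ℝ → EuclideanSpace ℝ (Fin Nr)) (hz : ∀ τ, z τ = τ • urp + (1 - τ) • ur0)
    (hstep : (urp - ur0) + (Δt / 2) • Matrix.toEuclideanLin Ar (urp + ur0)
        + Δt • (∫ τ in (0:ℝ)..1,
            Matrix.toEuclideanLin Ψᵀ (g (Matrix.toEuclideanLin Ψ (z τ)))) = 0) :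
    E (Matrix.toEuclideanLin Ψ urp) - E (Matrix.toEuclideanLin Ψ ur0)
        = -(1 / Δt) * ‖urp - ur0‖ ^ 2
          + ∫ τ in (0:ℝ)..1,
              ⟪Matrix.toEuclideanLin Ψ (urp - ur0),
                f (Matrix.toEuclideanLin Ψ (z τ)) - g (Matrix.toEuclideanLin Ψ (z τ))⟫_ℝ := by
  set Tψ := Matrix.toEuclideanLin Ψ with hTψ
  have hcontTψ : Continuous fun v => Tψ v := Tψ.continuous_of_finiteDimensional
  set up := Tψ urp with hup
  set u0 := Tψ ur0 with hu0
  set δ := urp - ur0 with hδ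
  -- the continuous path
  have hzc : Continuous z := by
    have : z = fun τ : ℝ => τ • urp + (1 - τ) • ur0 := funext hz
    rw [this]; fun_prop
  have hpath : ∀ τ : ℝ, Tψ (z τ) = u0 + τ • (up - u0) := by
    intro τ
    simp only [hz, map_add, LinearMap.map_smul]
    module
  -- continuity of integrands
  have hcz : Continuous fun τ => Tψ (z τ) := hcontTψ.comp hzc
  -- FTC for N along the path
  have hderivN : ∀ τ ∈ Set.uIcc (0:ℝ) 1,
      HasDerivAt (fun t => N (Tψ (z t))) ⟪f (Tψ (z τ)), up - u0⟫_ℝ τ := by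
    intro τ _
    have hc : HasDerivAt (fun t : ℝ => Tψ (z t)) (up - u0) τ := by
      have h1 : HasDerivAt (fun t : ℝ => u0 + t • (up - u0)) (up - u0) τ := by
        simpa using ((hasDerivAt_id τ).smul_const (up - u0)).const_add u0
      have : (fun t : ℝ => Tψ (z t)) = fun t : ℝ => u0 + t • (up - u0) :=
        funext hpath
      rw [this]; exact h1
    have hg' := (hN (Tψ (z τ))).hasFDerivAt.comp_hasDerivAt τ hc
    simpa [InnerProductSpace.toDual_apply_apply, Function.comp_def] using hg'
  have hintf : IntervalIntegrable (fun τ => ⟪f (Tψ (z τ)), up - u0⟫_ℝ)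
      MeasureTheory.volume 0 1 :=
    ((hf.comp hcz).inner continuous_const).intervalIntegrable 0 1
  have hFTC : N up - N u0 = ∫ τ in (0:ℝ)..1, ⟪f (Tψ (z τ)), up - u0⟫_ℝ := by
    have := intervalIntegral.integral_eq_sub_of_hasDerivAt hderivN hintf
    rw [this]
    congr 1 <;> rw [hz] <;> simp [hup, hu0]
  -- symmetry of A
  have hAsym : ∀ x y : EuclideanSpace ℝ (Fin 𝒩),
      ⟪x, Matrix.toEuclideanLin A y⟫_ℝ = ⟪Matrix.toEuclideanLin A x, y⟫_ℝ := by
    intro x y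
    have : Aᵀ = A := hA
    calc ⟪x, Matrix.toEuclideanLin A y⟫_ℝ
        = ⟪x, Matrix.toEuclideanLin Aᵀᵀ y⟫_ℝ := by rw [Matrix.transpose_transpose]
      _ = ⟪Matrix.toEuclideanLin Aᵀ x, y⟫_ℝ := transpose_adjoint' Aᵀ x y
      _ = ⟪Matrix.toEuclideanLin A x, y⟫_ℝ := by rw [this]
  -- quadratic part
  have hquad : (1/2) * ⟪up, Matrix.toEuclideanLin A up⟫_ℝ
      - (1/2) * ⟪u0, Matrix.toEuclideanLin A u0⟫_ℝ
      = (1/2) * ⟪δ, Matrix.toEuclideanLin Ar (urp + ur0)⟫_ℝ := by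
    have h1 : ⟪δ, Matrix.toEuclideanLin Ar (urp + ur0)⟫_ℝ
        = ⟪up - u0, Matrix.toEuclideanLin A (up + u0)⟫_ℝ := by
      rw [hAr, toEuclideanLin_mul', toEuclideanLin_mul', transpose_adjoint']
      congr 1
      · rw [hδ, map_sub]
      · rw [map_add]
    rw [h1]
    have hcross : ⟪u0, Matrix.toEuclideanLin A up⟫_ℝ
        = ⟪up, Matrix.toEuclideanLin A u0⟫_ℝ := by
      rw [hAsym u0 up, real_inner_comm]
    rw [inner_sub_left, map_add, inner_add_right, inner_add_right, hcross]
    ring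
  -- inner product with the step equation
  have hG : IntervalIntegrable (fun τ => Matrix.toEuclideanLin Ψᵀ (g (Tψ (z τ))))
      MeasureTheory.volume 0 1 := by
    have : Continuous fun τ => Matrix.toEuclideanLin Ψᵀ (g (Tψ (z τ))) :=
      (Matrix.toEuclideanLin Ψᵀ).continuous_of_finiteDimensional.comp (hg.comp hcz)
    exact this.intervalIntegrable 0 1
  have hswap : ⟪δ, ∫ τ in (0:ℝ)..1, Matrix.toEuclideanLin Ψᵀ (g (Tψ (z τ)))⟫_ℝ
      = ∫ τ in (0:ℝ)..1, ⟪Tψ δ, g (Tψ (z τ))⟫_ℝ := by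
    have h := (innerSL ℝ δ).intervalIntegral_comp_comm hG
    simp only [innerSL_apply_apply] at h
    rw [← h]
    simp only [transpose_adjoint']
    rfl
  have hstep' : ⟪δ, δ⟫_ℝ + (Δt/2) * ⟪δ, Matrix.toEuclideanLin Ar (urp + ur0)⟫_ℝ
      + Δt * (∫ τ in (0:ℝ)..1, ⟪Tψ δ, g (Tψ (z τ))⟫_ℝ) = 0 := by
    have h := congrArg (fun v => ⟪δ, v⟫_ℝ) hstep
    simp only [inner_add_right, real_inner_smul_right, inner_zero_right] at h
    rw [hswap] at h
    exact h
  have hnorm : ⟪δ, δ⟫_ℝ = ‖δ‖^2 := real_inner_self_eq_norm_sq δ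
  -- integrability of the g-integrand
  have hintg : IntervalIntegrable (fun τ => ⟪Tψ δ, g (Tψ (z τ))⟫_ℝ)
      MeasureTheory.volume 0 1 :=
    (continuous_const.inner (hg.comp hcz)).intervalIntegrable 0 1
  -- split the RHS integral
  have hsplit : (∫ τ in (0:ℝ)..1,
        ⟪Tψ δ, f (Tψ (z τ)) - g (Tψ (z τ))⟫_ℝ)
      = (∫ τ in (0:ℝ)..1, ⟪f (Tψ (z τ)), up - u0⟫_ℝ)
        - ∫ τ in (0:ℝ)..1, ⟪Tψ δ, g (Tψ (z τ))⟫_ℝ := by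
    have hδw : Tψ δ = up - u0 := by rw [hδ, map_sub]
    have h1 : ∀ τ : ℝ, ⟪Tψ δ, f (Tψ (z τ)) - g (Tψ (z τ))⟫_ℝ
        = ⟪f (Tψ (z τ)), up - u0⟫_ℝ - ⟪Tψ δ, g (Tψ (z τ))⟫_ℝ := by
      intro τ
      rw [inner_sub_right, hδw, real_inner_comm]
    simp only [h1]
    have hintf' : IntervalIntegrable (fun τ => ⟪f (Tψ (z τ)), up - u0⟫_ℝ)
        MeasureTheory.volume 0 1 := hintf
    exact intervalIntegral.integral_sub hintf' hintg
  -- assemble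
  rw [hE up, hE u0, hsplit, ← hFTC]
  have hΔt' : Δt ≠ 0 := ne_of_gt hΔt
  have h2 : (1/2) * ⟪δ, Matrix.toEuclideanLin Ar (urp + ur0)⟫_ℝ
      = -(1/Δt) * ‖δ‖^2 - ∫ τ in (0:ℝ)..1, ⟪Tψ δ, g (Tψ (z τ))⟫_ℝ := by
    rw [hnorm] at hstep'
    have h := hstep'
    field_simp at h ⊢
    linarith [h]
  linarith [hquad, h2]
end

section
/- Let A ∈ ℝ^{𝒩×𝒩} be symmetric, N : EuclideanSpace ℝ (Fin 𝒩) → ℝ continuously differentiable with gradient f, E(u) = (1/2)·⟪u, A·u⟫ + N(u), let R ∈ ℝ^{𝒩×𝒩} be invertible with M = Rᵀ R, let Ψ ∈ ℝ^{𝒩×N} satisfy Ψᵀ M Ψ = I_N, set A_r = Ψᵀ A Ψ, and let ĝ : EuclideanSpace ℝ (Fin 𝒩) → EuclideanSpace ℝ (Fin 𝒩) be continuous. Suppose Δt > 0 and u_r⁺, u_r⁰ ∈ EuclideanSpace ℝ (Fin N) satisfy the DEIM-reduced AVF step (u_r⁺ − u_r⁰) + (Δt/2)·A_r·(u_r⁺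 + u_r⁰) + Δt·∫_0^1 Ψᵀ ĝ(Ψ·z(τ)) dτ = 0 with z(τ) = τ·u_r⁺ + (1−τ)·u_r⁰. Let C > 0 be such that ‖f(Ψ·z(τ)) − ĝ(Ψ·z(τ))‖₂ ≤ C for all τ ∈ [0,1]. If Δt ≤ ‖u_r⁺ − u_r⁰‖₂ / (‖R^{-1}‖₂ · C), then E(Ψ·u_r⁺) ≤ E(Ψ·u_r⁰). -/
open MeasureTheory Matrix
open scoped InnerProductSpace

/-- The spectral (operator 2-)norm of a real matrix, i.e. the operator norm of the induced
linear map between Euclidean spaces. -/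
noncomputable def spectralNorm2 {m n : ℕ} (A : Matrix (Fin m) (Fin n) ℝ) : ℝ :=
  ‖LinearMap.toContinuousLinearMap (Matrix.toEuclideanLin A)‖

lemma tel_mul {k m n : ℕ} (A : Matrix (Fin k) (Fin m) ℝ) (B : Matrix (Fin m) (Fin n) ℝ)
    (v : EuclideanSpace ℝ (Fin n)) :
    Matrix.toEuclideanLin (A * B) v = Matrix.toEuclideanLin A (Matrix.toEuclideanLin B v) := by
  simp [Matrix.toEuclideanLin_apply, Matrix.mulVec_mulVec]

lemma tel_adj {m n : ℕ} (B : Matrix (Fin m) (Fin n) ℝ)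
    (x : EuclideanSpace ℝ (Fin m)) (y : EuclideanSpace ℝ (Fin n)) :
    ⟪Matrix.toEuclideanLin Bᵀ x, y⟫_ℝ = ⟪x, Matrix.toEuclideanLin B y⟫_ℝ := by
  rw [← Matrix.conjTranspose_eq_transpose_of_trivial,
    Matrix.toEuclideanLin_conjTranspose_eq_adjoint, LinearMap.adjoint_inner_left]

lemma spectralNorm2_nonneg {m n : ℕ} (B : Matrix (Fin m) (Fin n) ℝ) :
    0 ≤ spectralNorm2 B := norm_nonneg _

lemma tel_norm_le {m n : ℕ} (B : Matrix (Fin m) (Fin n) ℝ) (v : EuclideanSpace ℝ (Fin n)) :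
    ‖Matrix.toEuclideanLin B v‖ ≤ spectralNorm2 B * ‖v‖ := by
  have := (LinearMap.toContinuousLinearMap (Matrix.toEuclideanLin B)).le_opNorm v
  simpa [spectralNorm2] using this

lemma tel_transpose_norm_le {m n : ℕ} (B : Matrix (Fin m) (Fin n) ℝ)
    (v : EuclideanSpace ℝ (Fin m)) :
    ‖Matrix.toEuclideanLin Bᵀ v‖ ≤ spectralNorm2 B * ‖v‖ := by
  set w := Matrix.toEuclideanLin Bᵀ v with hw
  have h1 : ‖w‖ * ‖w‖ = ⟪v, Matrix.toEuclideanLin B w⟫_ℝ := by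
    rw [← tel_adj B v w, ← hw, real_inner_self_eq_norm_mul_norm]
  have h2 : ⟪v, Matrix.toEuclideanLin B w⟫_ℝ ≤ ‖v‖ * (spectralNorm2 B * ‖w‖) :=
    (real_inner_le_norm _ _).trans
      (mul_le_mul_of_nonneg_left (tel_norm_le B w) (norm_nonneg v))
  rcases eq_or_lt_of_le (norm_nonneg w) with h0 | h0
  · rw [← h0]; exact mul_nonneg (spectralNorm2_nonneg B) (norm_nonneg v)
  · nlinarith [norm_nonneg v]

lemma tel_iso {m n : ℕ} (Q : Matrix (Fin m) (Fin n) ℝ) (hQ : Qᵀ * Q = 1)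
    (x : EuclideanSpace ℝ (Fin n)) : ‖Matrix.toEuclideanLin Q x‖ = ‖x‖ := by
  have h : ⟪Matrix.toEuclideanLin Q x, Matrix.toEuclideanLin Q x⟫_ℝ = ⟪x, x⟫_ℝ := by
    rw [← tel_adj Q (Matrix.toEuclideanLin Q x) x, ← tel_mul, hQ]
    simp [Matrix.toEuclideanLin_apply, Matrix.one_mulVec]
  rw [real_inner_self_eq_norm_mul_norm, real_inner_self_eq_norm_mul_norm] at h
  nlinarith [norm_nonneg (Matrix.toEuclideanLin Q x), norm_nonneg x]

lemma tel_isoT_norm_le {m n : ℕ} (Q : Matrix (Fin m) (Fin n) ℝ) (hQ : Qᵀ * Q = 1)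
    (v : EuclideanSpace ℝ (Fin m)) : ‖Matrix.toEuclideanLin Qᵀ v‖ ≤ ‖v‖ := by
  set w := Matrix.toEuclideanLin Qᵀ v with hw
  have h1 : ‖w‖ * ‖w‖ = ⟪v, Matrix.toEuclideanLin Q w⟫_ℝ := by
    rw [← tel_adj Q v w, ← hw, real_inner_self_eq_norm_mul_norm]
  have h2 : ⟪v, Matrix.toEuclideanLin Q w⟫_ℝ ≤ ‖v‖ * ‖w‖ := by
    have := real_inner_le_norm v (Matrix.toEuclideanLin Q w)
    rwa [tel_iso Q hQ w] at this
  rcases eq_or_lt_of_le (norm_nonneg w) with h0 | h0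
  · rw [← h0]; exact norm_nonneg v
  · nlinarith [norm_nonneg v]

set_option maxHeartbeats 1000000 in
/-- Conditional energy stability of the DEIM reduced order model:
with symmetric stiffness matrix `A`, discrete energy `E u = (1/2)⟪u, Au⟫ + N u` with
`f = ∇N`, mass matrix `M = Rᵀ R` (`R` invertible), `M`-orthonormal basis matrix `Ψ`
(`Ψᵀ M Ψ = I`), reduced stiffness matrix `A_r = Ψᵀ A Ψ`, and DEIM approximation `ĝ` of `f`,
if `u_r⁺, u_r⁰` satisfy the DEIM-reduced AVF step, the DEIM error along the segment is
bounded by `C > 0`, and `Δt ≤ ‖u_r⁺ - u_r⁰‖₂ / (‖R⁻¹‖₂ C)`, then `E (Ψ u_r⁺) ≤ E (Ψ u_r⁰)`. -/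
theorem deim_rom_conditional_energy_stability {𝒩 Nr : ℕ}
    (A : Matrix (Fin 𝒩) (Fin 𝒩) ℝ) (hA : A.IsSymm)
    (N : EuclideanSpace ℝ (Fin 𝒩) → ℝ)
    (f : EuclideanSpace ℝ (Fin 𝒩) → EuclideanSpace ℝ (Fin 𝒩))
    (hN : ∀ u, HasGradientAt N (f u) u) (hf : Continuous f)
    (E : EuclideanSpace ℝ (Fin 𝒩) → ℝ)
    (hE : ∀ u : EuclideanSpace ℝ (Fin 𝒩),
      E u = (1 / 2) * ⟪u, Matrix.toEuclideanLin A u⟫_ℝ + N u)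
    (R : Matrix (Fin 𝒩) (Fin 𝒩) ℝ) (hR : IsUnit R)
    (M : Matrix (Fin 𝒩) (Fin 𝒩) ℝ) (hM : M = Rᵀ * R)
    (Ψ : Matrix (Fin 𝒩) (Fin Nr) ℝ) (hΨ : Ψᵀ * M * Ψ = 1)
    (Ar : Matrix (Fin Nr) (Fin Nr) ℝ) (hAr : Ar = Ψᵀ * A * Ψ)
    (g : EuclideanSpace ℝ (Fin 𝒩) → EuclideanSpace ℝ (Fin 𝒩)) (hg : Continuous g)
    (Δt : ℝ) (hΔt : 0 < Δt) (urp ur0 : EuclideanSpace ℝ (Fin Nr))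
    (z : ℝ → EuclideanSpace ℝ (Fin Nr)) (hz : ∀ τ, z τ = τ • urp + (1 - τ) • ur0)
    (hstep : (urp - ur0) + (Δt / 2) • Matrix.toEuclideanLin Ar (urp + ur0)
        + Δt • (∫ τ in (0:ℝ)..1,
            Matrix.toEuclideanLin Ψᵀ (g (Matrix.toEuclideanLin Ψ (z τ)))) = 0)
    (C : ℝ) (hC : 0 < C)
    (hbound : ∀ τ ∈ Set.Icc (0:ℝ) 1,
      ‖f (Matrix.toEuclideanLin Ψ (z τ)) - g (Matrix.toEuclideanLin Ψ (z τ))‖ ≤ C)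
    (hstepsize : Δt ≤ ‖urp - ur0‖ / (spectralNorm2 R⁻¹ * C)) :
    E (Matrix.toEuclideanLin Ψ urp) ≤ E (Matrix.toEuclideanLin Ψ ur0) := by
  classical
  set K : ℝ := spectralNorm2 R⁻¹ * C with hK
  set δ := urp - ur0 with hδ
  set s := urp + ur0 with hs
  set up := Matrix.toEuclideanLin Ψ urp with hup
  set u0 := Matrix.toEuclideanLin Ψ ur0 with hu0
  set Ig := ∫ τ in (0:ℝ)..1,
      Matrix.toEuclideanLin Ψᵀ (g (Matrix.toEuclideanLin Ψ (z τ))) with hIg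
  set If := ∫ τ in (0:ℝ)..1,
      Matrix.toEuclideanLin Ψᵀ (f (Matrix.toEuclideanLin Ψ (z τ))) with hIf
  -- basic continuity facts
  have hzc : ∀ τ : ℝ, Matrix.toEuclideanLin Ψ (z τ) = u0 + τ • Matrix.toEuclideanLin Ψ δ := by
    intro τ
    rw [hz τ, hδ]
    simp only [map_add, map_sub, LinearMap.map_smul]
    rw [← hup, ← hu0]
    module
  have hccont : Continuous fun τ : ℝ => Matrix.toEuclideanLin Ψ (z τ) := by
    rw [funext hzc]
    exact continuous_const.add (continuous_id.smul continuous_const)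
  have hTcont : Continuous fun x : EuclideanSpace ℝ (Fin 𝒩) =>
      Matrix.toEuclideanLin Ψᵀ x := (Matrix.toEuclideanLin Ψᵀ).continuous_of_finiteDimensional
  have hintf : IntervalIntegrable
      (fun τ => Matrix.toEuclideanLin Ψᵀ (f (Matrix.toEuclideanLin Ψ (z τ)))) volume 0 1 :=
    (hTcont.comp (hf.comp hccont)).intervalIntegrable 0 1
  have hintg : IntervalIntegrable
      (fun τ => Matrix.toEuclideanLin Ψᵀ (g (Matrix.toEuclideanLin Ψ (z τ)))) volume 0 1 :=
    (hTcont.comp (hg.comp hccont)).intervalIntegrable 0 1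
  -- derivative of τ ↦ N (Ψ z τ)
  have hderiv : ∀ τ : ℝ, HasDerivAt (fun t => N (Matrix.toEuclideanLin Ψ (z t)))
      ⟪f (Matrix.toEuclideanLin Ψ (z τ)), Matrix.toEuclideanLin Ψ δ⟫_ℝ τ := by
    intro τ
    have hc : HasDerivAt (fun t => Matrix.toEuclideanLin Ψ (z t))
        (Matrix.toEuclideanLin Ψ δ) τ := by
      rw [funext hzc]
      simpa using ((hasDerivAt_id τ).smul_const (Matrix.toEuclideanLin Ψ δ)).const_add u0
    have h1 := ((hN _).hasFDerivAt).comp_hasDerivAt τ hc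
    simp [InnerProductSpace.toDual_apply_apply] at h1
    exact h1
  have hz1 : z 1 = urp := by rw [hz]; simp
  have hz0 : z 0 = ur0 := by rw [hz]; simp
  -- FTC: N difference
  have hFTC : ∫ τ in (0:ℝ)..1, ⟪f (Matrix.toEuclideanLin Ψ (z τ)),
      Matrix.toEuclideanLin Ψ δ⟫_ℝ = N up - N u0 := by
    have := intervalIntegral.integral_eq_sub_of_hasDerivAt
      (f := fun t => N (Matrix.toEuclideanLin Ψ (z t)))
      (f' := fun τ => ⟪f (Matrix.toEuclideanLin Ψ (z τ)), Matrix.toEuclideanLin Ψ δ⟫_ℝ)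
      (fun τ _ => hderiv τ)
      (((hf.comp hccont).inner continuous_const).intervalIntegrable 0 1)
    rw [this]
    simp only [hz1, hz0, hup, hu0]
  -- N difference as inner with If
  have hNdiff : N up - N u0 = ⟪δ, If⟫_ℝ := by
    rw [← hFTC]
    have h1 : (∫ τ in (0:ℝ)..1, ⟪f (Matrix.toEuclideanLin Ψ (z τ)),
        Matrix.toEuclideanLin Ψ δ⟫_ℝ)
        = ∫ τ in (0:ℝ)..1, (innerSL ℝ δ)
            (Matrix.toEuclideanLin Ψᵀ (f (Matrix.toEuclideanLin Ψ (z τ)))) := by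
      apply intervalIntegral.integral_congr
      intro τ _
      simp only [innerSL_apply_apply]
      rw [← tel_adj]
      exact real_inner_comm _ _
    rw [h1, ContinuousLinearMap.intervalIntegral_comp_comm _ hintf, innerSL_apply_apply, hIf]
  -- symmetry of A
  have hsym : ∀ x y : EuclideanSpace ℝ (Fin 𝒩),
      ⟪x, Matrix.toEuclideanLin A y⟫_ℝ = ⟪y, Matrix.toEuclideanLin A x⟫_ℝ := by
    intro x y
    rw [← tel_adj A x y, hA.eq, real_inner_comm]
  -- quadratic difference
  have hquad : ⟪up, Matrix.toEuclideanLin A up⟫_ℝ - ⟪u0, Matrix.toEuclideanLin A u0⟫_ℝ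
      = ⟪Matrix.toEuclideanLin Ar s, δ⟫_ℝ := by
    have e1 : ⟪up - u0, Matrix.toEuclideanLin A (up + u0)⟫_ℝ
        = ⟪up, Matrix.toEuclideanLin A up⟫_ℝ - ⟪u0, Matrix.toEuclideanLin A u0⟫_ℝ := by
      rw [map_add, inner_sub_left, inner_add_right, inner_add_right]
      have := hsym u0 up
      linarith [hsym u0 up]
    have e2 : up - u0 = Matrix.toEuclideanLin Ψ δ := by rw [hδ, map_sub, hup, hu0]
    have e3 : up + u0 = Matrix.toEuclideanLin Ψ s := by rw [hs, map_add, hup, hu0]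
    rw [← e1, e2, e3, real_inner_comm, ← tel_adj, hAr, tel_mul, tel_mul]
  -- step equation rearranged
  have hstep2 : (Δt / 2) • Matrix.toEuclideanLin Ar s + Δt • Ig = -δ := by
    have h := hstep
    rw [add_assoc] at h
    exact eq_neg_of_add_eq_zero_right h
  -- main energy identity
  have hmain : Δt * (E up - E u0)
      = -(‖δ‖ * ‖δ‖) + Δt * (⟪If, δ⟫_ℝ - ⟪Ig, δ⟫_ℝ) := by
    have hEdiff : E up - E u0
        = (1 / 2) * ⟪Matrix.toEuclideanLin Ar s, δ⟫_ℝ + ⟪δ, If⟫_ℝ := by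
      rw [hE up, hE u0]
      have := hNdiff
      linarith [hquad, hNdiff]
    have hinner : ⟪(Δt / 2) • Matrix.toEuclideanLin Ar s + Δt • Ig, δ⟫_ℝ = ⟪-δ, δ⟫_ℝ := by
      rw [hstep2]
    rw [inner_add_left, real_inner_smul_left, real_inner_smul_left, inner_neg_left,
      real_inner_self_eq_norm_mul_norm] at hinner
    rw [hEdiff]
    have hcomm : ⟪δ, If⟫_ℝ = ⟪If, δ⟫_ℝ := real_inner_comm If δ
    rw [hcomm]
    linear_combination hinner
  -- bound on DEIM error integral
  have hΨT : ∀ v : EuclideanSpace ℝ (Fin 𝒩),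
      ‖Matrix.toEuclideanLin Ψᵀ v‖ ≤ spectralNorm2 R⁻¹ * ‖v‖ := by
    intro v
    have hinv : R⁻¹ * R = 1 := Matrix.nonsing_inv_mul R ((Matrix.isUnit_iff_isUnit_det R).mp hR)
    have hfact : Ψᵀ = (R * Ψ)ᵀ * (R⁻¹)ᵀ := by
      rw [← Matrix.transpose_mul, ← Matrix.mul_assoc, hinv, Matrix.one_mul]
    have hQ : (R * Ψ)ᵀ * (R * Ψ) = 1 := by
      rw [Matrix.transpose_mul, Matrix.mul_assoc, ← Matrix.mul_assoc Rᵀ R Ψ, ← hM,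
        ← Matrix.mul_assoc, hΨ]
    calc ‖Matrix.toEuclideanLin Ψᵀ v‖
        = ‖Matrix.toEuclideanLin (R * Ψ)ᵀ (Matrix.toEuclideanLin (R⁻¹)ᵀ v)‖ := by
          rw [hfact, tel_mul]
      _ ≤ ‖Matrix.toEuclideanLin (R⁻¹)ᵀ v‖ := tel_isoT_norm_le (R * Ψ) hQ _
      _ ≤ spectralNorm2 R⁻¹ * ‖v‖ := tel_transpose_norm_le R⁻¹ v
  have hIfg : ⟪If, δ⟫_ℝ - ⟪Ig, δ⟫_ℝ ≤ K * ‖δ‖ := by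
    have hsub : If - Ig = ∫ τ in (0:ℝ)..1,
        Matrix.toEuclideanLin Ψᵀ (f (Matrix.toEuclideanLin Ψ (z τ))
          - g (Matrix.toEuclideanLin Ψ (z τ))) := by
      rw [hIf, hIg, ← intervalIntegral.integral_sub hintf hintg]
      apply intervalIntegral.integral_congr
      intro τ _
      simp only [map_sub]
    have hbnd : ‖If - Ig‖ ≤ K := by
      rw [hsub]
      have := intervalIntegral.norm_integral_le_of_norm_le_const (a := 0) (b := 1) (C := K)
        (f := fun τ => Matrix.toEuclideanLin Ψᵀ (f (Matrix.toEuclideanLin Ψ (z τ))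
          - g (Matrix.toEuclideanLin Ψ (z τ)))) ?_
      · simpa using this
      · intro τ hτ
        have hτ' : τ ∈ Set.Icc (0:ℝ) 1 := by
          rw [Set.uIoc_of_le (by norm_num : (0:ℝ) ≤ 1)] at hτ
          exact ⟨le_of_lt hτ.1, hτ.2⟩
        calc ‖Matrix.toEuclideanLin Ψᵀ (f (Matrix.toEuclideanLin Ψ (z τ))
              - g (Matrix.toEuclideanLin Ψ (z τ)))‖
            ≤ spectralNorm2 R⁻¹ * ‖f (Matrix.toEuclideanLin Ψ (z τ))
              - g (Matrix.toEuclideanLin Ψ (z τ))‖ := hΨT _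
          _ ≤ spectralNorm2 R⁻¹ * C :=
              mul_le_mul_of_nonneg_left (hbound τ hτ') (spectralNorm2_nonneg R⁻¹)
          _ = K := hK.symm
    calc ⟪If, δ⟫_ℝ - ⟪Ig, δ⟫_ℝ = ⟪If - Ig, δ⟫_ℝ := by rw [inner_sub_left]
      _ ≤ ‖If - Ig‖ * ‖δ‖ := real_inner_le_norm _ _
      _ ≤ K * ‖δ‖ := mul_le_mul_of_nonneg_right hbnd (norm_nonneg δ)
  -- step size condition
  have hKnonneg : 0 ≤ K := mul_nonneg (spectralNorm2_nonneg R⁻¹) hC.le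
  have hΔtK : Δt * K ≤ ‖δ‖ := by
    rcases eq_or_lt_of_le hKnonneg with h0 | h0
    · rw [← h0] at hstepsize ⊢
      rw [div_zero] at hstepsize
      linarith
    · exact (le_div_iff₀ h0).mp hstepsize
  -- conclude
  have hfinal : Δt * (E up - E u0) ≤ 0 := by
    rw [hmain]
    have h1 : Δt * (⟪If, δ⟫_ℝ - ⟪Ig, δ⟫_ℝ) ≤ Δt * (K * ‖δ‖) :=
      mul_le_mul_of_nonneg_left hIfg hΔt.le
    nlinarith [mul_le_mul_of_nonneg_right hΔtK (norm_nonneg δ)]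
  by_contra hcon
  push_neg at hcon
  nlinarith [mul_pos hΔt (sub_pos.mpr hcon)]
end

section
/- Let A ∈ ℝ^{𝒩×𝒩} be symmetric, N : EuclideanSpace ℝ (Fin 𝒩) → ℝ continuously differentiable with gradient f, E(u) = (1/2)·⟪u, A·u⟫ + N(u), let R ∈ ℝ^{𝒩×𝒩} be invertible with M = Rᵀ R, let Ψ ∈ ℝ^{𝒩×N} satisfy Ψᵀ M Ψ = I_N, set A_r = Ψᵀ A Ψ, and let ĝ : EuclideanSpace ℝ (Fin 𝒩) → EuclideanSpace ℝ (Fin 𝒩) be continuous. Let Δt > 0 and let (u_rⁿ)_{n=0}^{J} be a sequence in EuclideanSpace ℝ (Fin N) satisfying, for every n < J, the DEIM-reduced AVF step (u_r^{n+1} − u_rⁿ) + (Δt/2)·A_r·(u_r^{n+1} + u_rⁿ) + Δt·∫_0^1 Ψᵀ ĝ(Ψ·zₙ(τ)) dτ = 0 with zₙ(τ) = τ·u_r^{n+1} + (1−τ)·u_rⁿ. Let C > 0 satisfy ‖f(Ψ·zₙ(τ)) − ĝ(Ψ·zₙ(τ))‖₂ ≤ C for all n < J and τ ∈ [0,1].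 If Δt ≤ (min_{n < J} ‖u_r^{n+1} − u_rⁿ‖₂) / (‖R^{-1}‖₂ · C), then the reduced energy sequence is nonincreasing: E(Ψ·u_rⁿ) ≤ E(Ψ·u_rᵐ) for all m ≤ n ≤ J. -/
open MeasureTheory Matrix
open scoped InnerProductSpace

namespace DeimAux

variable {p q r : ℕ}

lemma tEL_mul (B : Matrix (Fin p) (Fin q) ℝ) (Cm : Matrix (Fin q) (Fin r) ℝ)
    (v : EuclideanSpace ℝ (Fin r)) :
    Matrix.toEuclideanLin (B * Cm) v = Matrix.toEuclideanLin B (Matrix.toEuclideanLin Cm v) := by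
  simp [Matrix.toEuclideanLin_apply, Matrix.mulVec_mulVec]

lemma tEL_one (v : EuclideanSpace ℝ (Fin p)) :
    Matrix.toEuclideanLin (1 : Matrix (Fin p) (Fin p) ℝ) v = v := by
  simp [Matrix.toEuclideanLin_apply]

lemma inner_tEL_transpose (B : Matrix (Fin p) (Fin q) ℝ) (x : EuclideanSpace ℝ (Fin p))
    (y : EuclideanSpace ℝ (Fin q)) :
    ⟪Matrix.toEuclideanLin Bᵀ x, y⟫_ℝ = ⟪x, Matrix.toEuclideanLin B y⟫_ℝ := by
  rw [show Bᵀ = Bᴴ from (B.conjTranspose_eq_transpose_of_trivial).symm,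
    Matrix.toEuclideanLin_conjTranspose_eq_adjoint, LinearMap.adjoint_inner_left]

lemma inner_tEL_left (B : Matrix (Fin p) (Fin q) ℝ) (x : EuclideanSpace ℝ (Fin q))
    (y : EuclideanSpace ℝ (Fin p)) :
    ⟪Matrix.toEuclideanLin B x, y⟫_ℝ = ⟪x, Matrix.toEuclideanLin Bᵀ y⟫_ℝ := by
  simpa [Matrix.transpose_transpose] using inner_tEL_transpose Bᵀ x y

lemma tEL_le (B : Matrix (Fin p) (Fin q) ℝ) (v : EuclideanSpace ℝ (Fin q)) :
    ‖Matrix.toEuclideanLin B v‖ ≤ spectralNorm2 B * ‖v‖ :=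
  (LinearMap.toContinuousLinearMap (Matrix.toEuclideanLin B)).le_opNorm v

lemma tEL_continuous (B : Matrix (Fin p) (Fin q) ℝ) :
    Continuous fun v : EuclideanSpace ℝ (Fin q) => Matrix.toEuclideanLin B v :=
  (LinearMap.toContinuousLinearMap (Matrix.toEuclideanLin B)).continuous

lemma norm_le_of_sq_le {c w : ℝ} (hc : 0 ≤ c) (hw : 0 ≤ w) (h : w ^ 2 ≤ c * w) : w ≤ c := by
  rcases hw.eq_or_lt with h0 | h0
  · linarith
  · nlinarith

lemma norm_tEL_transpose_le (B : Matrix (Fin p) (Fin q) ℝ) (x : EuclideanSpace ℝ (Fin p)) :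
    ‖Matrix.toEuclideanLin Bᵀ x‖ ≤ spectralNorm2 B * ‖x‖ := by
  set w := Matrix.toEuclideanLin Bᵀ x with hw
  have h1 : ‖w‖ ^ 2 = ⟪x, Matrix.toEuclideanLin B w⟫_ℝ := by
    rw [← inner_tEL_transpose, ← hw, real_inner_self_eq_norm_sq]
  have h2 : ⟪x, Matrix.toEuclideanLin B w⟫_ℝ ≤ ‖x‖ * (spectralNorm2 B * ‖w‖) :=
    (real_inner_le_norm _ _).trans (by
      have := tEL_le B w
      have := norm_nonneg x
      nlinarith)
  refine norm_le_of_sq_le (mul_nonneg (norm_nonneg _) (norm_nonneg _)) (norm_nonneg _) ?_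
  calc ‖w‖ ^ 2 ≤ ‖x‖ * (spectralNorm2 B * ‖w‖) := h1 ▸ h2
    _ = spectralNorm2 B * ‖x‖ * ‖w‖ := by ring

lemma ftc_inner {n : ℕ} (N : EuclideanSpace ℝ (Fin n) → ℝ)
    (f : EuclideanSpace ℝ (Fin n) → EuclideanSpace ℝ (Fin n))
    (hN : ∀ u, HasGradientAt N (f u) u) (hf : Continuous f)
    (a b : EuclideanSpace ℝ (Fin n)) :
    N b - N a = ∫ τ in (0:ℝ)..1, ⟪f (τ • b + (1 - τ) • a), b - a⟫_ℝ := by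
  have key : ∀ τ : ℝ, HasDerivAt (fun t : ℝ => N (t • b + (1 - t) • a))
      ⟪f (τ • b + (1 - τ) • a), b - a⟫_ℝ τ := by
    intro τ
    have hγ : HasDerivAt (fun t : ℝ => t • b + (1 - t) • a) (b - a) τ := by
      have h1 : HasDerivAt (fun t : ℝ => t • b) ((1:ℝ) • b) τ :=
        (hasDerivAt_id τ).smul_const b
      have h2 : HasDerivAt (fun t : ℝ => (1 - t) • a) ((-1:ℝ) • a) τ :=
        ((hasDerivAt_id τ).const_sub 1 |>.smul_const a).congr_deriv rfl
      have h3 := h1.add h2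
      rw [one_smul, neg_one_smul, ← sub_eq_add_neg] at h3
      exact h3
    have := ((hN _).hasFDerivAt.comp_hasDerivAt τ hγ)
    simpa [InnerProductSpace.toDual_apply_apply, Function.comp_def] using this
  have hcont : Continuous fun τ : ℝ => ⟪f (τ • b + (1 - τ) • a), b - a⟫_ℝ := by
    exact (hf.comp (by continuity)).inner continuous_const
  have := intervalIntegral.integral_eq_sub_of_hasDerivAt
    (f := fun t : ℝ => N (t • b + (1 - t) • a)) (fun τ _ => key τ)
    (hcont.intervalIntegrable 0 1)
  simpa using this.symm

lemma contr_of_orthonormal (B : Matrix (Fin p) (Fin q) ℝ) (hBB : Bᵀ * B = 1)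
    (y : EuclideanSpace ℝ (Fin p)) :
    ‖Matrix.toEuclideanLin Bᵀ y‖ ≤ ‖y‖ := by
  have hiso : ∀ x : EuclideanSpace ℝ (Fin q),
      ⟪Matrix.toEuclideanLin B x, Matrix.toEuclideanLin B x⟫_ℝ = ⟪x, x⟫_ℝ := by
    intro x
    rw [inner_tEL_left, ← tEL_mul, hBB, tEL_one]
  have h2 : ⟪Matrix.toEuclideanLin Bᵀ y, Matrix.toEuclideanLin Bᵀ y⟫_ℝ
      = ⟪y, Matrix.toEuclideanLin B (Matrix.toEuclideanLin Bᵀ y)⟫_ℝ :=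
    inner_tEL_transpose _ y _
  have h3 : ‖Matrix.toEuclideanLin B (Matrix.toEuclideanLin Bᵀ y)‖
      = ‖Matrix.toEuclideanLin Bᵀ y‖ := by
    have h5 : ‖Matrix.toEuclideanLin B (Matrix.toEuclideanLin Bᵀ y)‖ ^ 2
        = ‖Matrix.toEuclideanLin Bᵀ y‖ ^ 2 := by
      rw [← real_inner_self_eq_norm_sq, ← real_inner_self_eq_norm_sq]
      exact hiso _
    rw [← Real.sqrt_sq (norm_nonneg (Matrix.toEuclideanLin B (Matrix.toEuclideanLin Bᵀ y))),
      ← Real.sqrt_sq (norm_nonneg (Matrix.toEuclideanLin Bᵀ y)), h5]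
  refine norm_le_of_sq_le (norm_nonneg y) (norm_nonneg _) ?_
  calc ‖Matrix.toEuclideanLin Bᵀ y‖ ^ 2
      = ⟪y, Matrix.toEuclideanLin B (Matrix.toEuclideanLin Bᵀ y)⟫_ℝ := by
        rw [← real_inner_self_eq_norm_sq]; exact h2
    _ ≤ ‖y‖ * ‖Matrix.toEuclideanLin B (Matrix.toEuclideanLin Bᵀ y)‖ := real_inner_le_norm _ _
    _ = ‖y‖ * ‖Matrix.toEuclideanLin Bᵀ y‖ := by rw [h3]

end DeimAux

set_option maxHeartbeats 2000000 in
lemma DeimAux.deim_step {𝒩 Nr : ℕ}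
    (A : Matrix (Fin 𝒩) (Fin 𝒩) ℝ) (hA : A.IsSymm)
    (N : EuclideanSpace ℝ (Fin 𝒩) → ℝ)
    (f : EuclideanSpace ℝ (Fin 𝒩) → EuclideanSpace ℝ (Fin 𝒩))
    (hN : ∀ u, HasGradientAt N (f u) u) (hf : Continuous f)
    (E : EuclideanSpace ℝ (Fin 𝒩) → ℝ)
    (hE : ∀ u : EuclideanSpace ℝ (Fin 𝒩),
      E u = (1 / 2) * ⟪u, Matrix.toEuclideanLin A u⟫_ℝ + N u)
    (R : Matrix (Fin 𝒩) (Fin 𝒩) ℝ) (hR : IsUnit R)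
    (M : Matrix (Fin 𝒩) (Fin 𝒩) ℝ) (hM : M = Rᵀ * R)
    (Ψ : Matrix (Fin 𝒩) (Fin Nr) ℝ) (hΨ : Ψᵀ * M * Ψ = 1)
    (Ar : Matrix (Fin Nr) (Fin Nr) ℝ) (hAr : Ar = Ψᵀ * A * Ψ)
    (g : EuclideanSpace ℝ (Fin 𝒩) → EuclideanSpace ℝ (Fin 𝒩)) (hg : Continuous g)
    (Δt : ℝ) (hΔt : 0 < Δt) (J : ℕ) (u : ℕ → EuclideanSpace ℝ (Fin Nr))
    (z : ℕ → ℝ → EuclideanSpace ℝ (Fin Nr))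
    (hz : ∀ n τ, z n τ = τ • u (n + 1) + (1 - τ) • u n)
    (hstep : ∀ n < J, (u (n + 1) - u n)
        + (Δt / 2) • Matrix.toEuclideanLin Ar (u (n + 1) + u n)
        + Δt • (∫ τ in (0:ℝ)..1,
            Matrix.toEuclideanLin Ψᵀ (g (Matrix.toEuclideanLin Ψ (z n τ)))) = 0)
    (C : ℝ) (hC : 0 < C)
    (hbound : ∀ n < J, ∀ τ ∈ Set.Icc (0:ℝ) 1,
      ‖f (Matrix.toEuclideanLin Ψ (z n τ)) - g (Matrix.toEuclideanLin Ψ (z n τ))‖ ≤ C)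
    (hstepsize : Δt ≤ (⨅ n : Fin J, ‖u (n + 1) - u n‖) / (spectralNorm2 R⁻¹ * C))
    (h𝒩 : 0 < 𝒩) :
    ∀ k, k < J → E (Matrix.toEuclideanLin Ψ (u (k + 1)))
      ≤ E (Matrix.toEuclideanLin Ψ (u k)) := by
  -- preliminaries
  have hRdet : IsUnit R.det := (Matrix.isUnit_iff_isUnit_det R).mp hR
  have hRinv : R⁻¹ * R = 1 := Matrix.nonsing_inv_mul R hRdet
  have hspos : 0 < spectralNorm2 R⁻¹ := by
    rcases (norm_nonneg (LinearMap.toContinuousLinearMap (Matrix.toEuclideanLin R⁻¹))).eq_or_lt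
      with h | h
    · exfalso
      have hL : LinearMap.toContinuousLinearMap (Matrix.toEuclideanLin R⁻¹) = 0 := by
        rwa [eq_comm, norm_eq_zero] at h
      have hL2 : Matrix.toEuclideanLin R⁻¹ = 0 :=
        LinearMap.toContinuousLinearMap.injective (hL.trans (map_zero _).symm)
      have hR0 : R⁻¹ = 0 := Matrix.toEuclideanLin.injective (hL2.trans (map_zero _).symm)
      rw [hR0, Matrix.zero_mul] at hRinv
      have h00 := congrFun (congrFun hRinv ⟨0, h𝒩⟩) ⟨0, h𝒩⟩
      simp [Matrix.one_apply] at h00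
    · exact h
  -- adjoint relation for Ψ
  have hPsiAd : ∀ (a : EuclideanSpace ℝ (Fin Nr)) (y : EuclideanSpace ℝ (Fin 𝒩)),
      ⟪Matrix.toEuclideanLin Ψ a, y⟫_ℝ = ⟪a, Matrix.toEuclideanLin Ψᵀ y⟫_ℝ :=
    fun a y => DeimAux.inner_tEL_left Ψ a y
  -- reduced stiffness
  have hQ : ∀ a b : EuclideanSpace ℝ (Fin Nr),
      ⟪Matrix.toEuclideanLin Ψ a, Matrix.toEuclideanLin A (Matrix.toEuclideanLin Ψ b)⟫_ℝ
        = ⟪a, Matrix.toEuclideanLin Ar b⟫_ℝ := by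
    intro a b
    rw [hPsiAd, hAr, DeimAux.tEL_mul (Ψᵀ * A) Ψ, DeimAux.tEL_mul Ψᵀ A]
  have hArT : Arᵀ = Ar := by
    simp [hAr, Matrix.transpose_mul, Matrix.mul_assoc, hA.eq]
  have hArInner : ∀ a b : EuclideanSpace ℝ (Fin Nr),
      ⟪Matrix.toEuclideanLin Ar a, b⟫_ℝ = ⟪a, Matrix.toEuclideanLin Ar b⟫_ℝ := by
    intro a b
    conv_lhs => rw [← hArT]
    exact DeimAux.inner_tEL_transpose Ar a b
  -- contraction property of (RΨ)ᵀ
  have hortho : (R * Ψ)ᵀ * (R * Ψ) = 1 := by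
    rw [Matrix.transpose_mul,
      show Ψᵀ * Rᵀ * (R * Ψ) = Ψᵀ * (Rᵀ * R) * Ψ by simp only [Matrix.mul_assoc], ← hM, hΨ]
  have hcontr : ∀ y : EuclideanSpace ℝ (Fin 𝒩),
      ‖Matrix.toEuclideanLin (R * Ψ)ᵀ y‖ ≤ ‖y‖ :=
    fun y => DeimAux.contr_of_orthonormal (R * Ψ) hortho y
  -- bound for Ψᵀ
  have hPsiTbound : ∀ e : EuclideanSpace ℝ (Fin 𝒩),
      ‖Matrix.toEuclideanLin Ψᵀ e‖ ≤ spectralNorm2 R⁻¹ * ‖e‖ := by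
    intro e
    have hfac : Ψᵀ = (R * Ψ)ᵀ * (R⁻¹)ᵀ := by
      rw [← Matrix.transpose_mul, ← Matrix.mul_assoc, hRinv, Matrix.one_mul]
    calc ‖Matrix.toEuclideanLin Ψᵀ e‖
        = ‖Matrix.toEuclideanLin (R * Ψ)ᵀ (Matrix.toEuclideanLin (R⁻¹)ᵀ e)‖ := by
          rw [hfac, DeimAux.tEL_mul]
      _ ≤ ‖Matrix.toEuclideanLin (R⁻¹)ᵀ e‖ := hcontr _
      _ ≤ spectralNorm2 R⁻¹ * ‖e‖ := DeimAux.norm_tEL_transpose_le _ _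
  -- continuity of the curves
  have hzc : ∀ n, Continuous fun τ : ℝ => Matrix.toEuclideanLin Ψ (z n τ) := by
    intro n
    have hzz : (fun τ : ℝ => Matrix.toEuclideanLin Ψ (z n τ))
        = fun τ : ℝ => Matrix.toEuclideanLin Ψ (τ • u (n + 1) + (1 - τ) • u n) := by
      funext τ; rw [hz]
    rw [hzz]
    exact (DeimAux.tEL_continuous Ψ).comp
      ((continuous_id.smul continuous_const).add
        ((continuous_const.sub continuous_id).smul continuous_const))
  -- single step energy decrease
  have step : ∀ k, k < J → E (Matrix.toEuclideanLin Ψ (u (k + 1)))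
      ≤ E (Matrix.toEuclideanLin Ψ (u k)) := by
    intro k hk
    set v := u (k + 1) - u k with hv
    -- integrands
    have hcF : Continuous fun τ : ℝ =>
        Matrix.toEuclideanLin Ψᵀ (f (Matrix.toEuclideanLin Ψ (z k τ))) :=
      (DeimAux.tEL_continuous Ψᵀ).comp (hf.comp (hzc k))
    have hcG : Continuous fun τ : ℝ =>
        Matrix.toEuclideanLin Ψᵀ (g (Matrix.toEuclideanLin Ψ (z k τ))) :=
      (DeimAux.tEL_continuous Ψᵀ).comp (hg.comp (hzc k))
    have hcD : Continuous fun τ : ℝ =>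
        Matrix.toEuclideanLin Ψᵀ (f (Matrix.toEuclideanLin Ψ (z k τ))
          - g (Matrix.toEuclideanLin Ψ (z k τ))) :=
      (DeimAux.tEL_continuous Ψᵀ).comp ((hf.comp (hzc k)).sub (hg.comp (hzc k)))
    have hiF := hcF.intervalIntegrable (μ := volume) (0:ℝ) 1
    have hiG := hcG.intervalIntegrable (μ := volume) (0:ℝ) 1
    have hiD := hcD.intervalIntegrable (μ := volume) (0:ℝ) 1
    set IF := ∫ τ in (0:ℝ)..1,
      Matrix.toEuclideanLin Ψᵀ (f (Matrix.toEuclideanLin Ψ (z k τ))) with hIF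
    set IG := ∫ τ in (0:ℝ)..1,
      Matrix.toEuclideanLin Ψᵀ (g (Matrix.toEuclideanLin Ψ (z k τ))) with hIG
    set ID := ∫ τ in (0:ℝ)..1,
      Matrix.toEuclideanLin Ψᵀ (f (Matrix.toEuclideanLin Ψ (z k τ))
        - g (Matrix.toEuclideanLin Ψ (z k τ))) with hID
    clear_value v IF IG ID
    have hFDG : IF = ID + IG := by
      rw [hIF, hID, hIG, ← intervalIntegral.integral_add hiD hiG]
      apply intervalIntegral.integral_congr
      intro τ _
      beta_reduce
      rw [map_sub]
      abel
    -- step equation rearranged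
    have hse := hstep k hk
    rw [← hIG, ← hv] at hse
    have h1 : (Δt / 2) • Matrix.toEuclideanLin Ar (u (k + 1) + u k) + Δt • IG = -v := by
      rw [add_assoc] at hse
      exact eq_neg_of_add_eq_zero_right hse
    have hkey : (1 / 2 : ℝ) • Matrix.toEuclideanLin Ar (u (k + 1) + u k) + IG
        = -(Δt⁻¹ • v) := by
      have h2 : Δt • ((1 / 2 : ℝ) • Matrix.toEuclideanLin Ar (u (k + 1) + u k) + IG) = -v := by
        rw [smul_add, smul_smul, show Δt * (1 / 2) = Δt / 2 by ring]
        exact h1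
      have h3 := congrArg (fun w : EuclideanSpace ℝ (Fin Nr) => Δt⁻¹ • w) h2
      rwa [smul_smul, inv_mul_cancel₀ (ne_of_gt hΔt), one_smul, smul_neg] at h3
    -- quadratic part
    have hquad : ⟪Matrix.toEuclideanLin Ar (u (k + 1) + u k), v⟫_ℝ
        = ⟪u (k + 1), Matrix.toEuclideanLin Ar (u (k + 1))⟫_ℝ
          - ⟪u k, Matrix.toEuclideanLin Ar (u k)⟫_ℝ := by
      rw [hv]
      have hcross : ⟪Matrix.toEuclideanLin Ar (u (k + 1)), u k⟫_ℝ
          = ⟪Matrix.toEuclideanLin Ar (u k), u (k + 1)⟫_ℝ := by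
        rw [hArInner, real_inner_comm]
      simp only [map_add, inner_add_left, inner_sub_right]
      rw [hcross, real_inner_comm (Matrix.toEuclideanLin Ar (u (k + 1))) (u (k + 1)),
        real_inner_comm (Matrix.toEuclideanLin Ar (u k)) (u k)]
      ring
    -- nonlinear part
    have hNdiff : N (Matrix.toEuclideanLin Ψ (u (k + 1))) - N (Matrix.toEuclideanLin Ψ (u k))
        = ∫ τ in (0:ℝ)..1,
            ⟪Matrix.toEuclideanLin Ψᵀ (f (Matrix.toEuclideanLin Ψ (z k τ))), v⟫_ℝ := by
      rw [DeimAux.ftc_inner N f hN hf (Matrix.toEuclideanLin Ψ (u k))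
        (Matrix.toEuclideanLin Ψ (u (k + 1)))]
      apply intervalIntegral.integral_congr
      intro τ _
      beta_reduce
      have hzψ : τ • Matrix.toEuclideanLin Ψ (u (k + 1))
          + (1 - τ) • Matrix.toEuclideanLin Ψ (u k)
          = Matrix.toEuclideanLin Ψ (z k τ) := by
        rw [hz]; simp
      rw [hzψ, show Matrix.toEuclideanLin Ψ (u (k + 1)) - Matrix.toEuclideanLin Ψ (u k)
        = Matrix.toEuclideanLin Ψ v by rw [hv, map_sub]]
      rw [real_inner_comm, hPsiAd, real_inner_comm]
    have hIFinner : (∫ τ in (0:ℝ)..1,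
        ⟪Matrix.toEuclideanLin Ψᵀ (f (Matrix.toEuclideanLin Ψ (z k τ))), v⟫_ℝ)
        = ⟪IF, v⟫_ℝ := by
      have h := (innerSL ℝ v).intervalIntegral_comp_comm hiF
      simp only [innerSL_apply_apply] at h
      rw [← hIF] at h
      calc (∫ τ in (0:ℝ)..1,
            ⟪Matrix.toEuclideanLin Ψᵀ (f (Matrix.toEuclideanLin Ψ (z k τ))), v⟫_ℝ)
          = ∫ τ in (0:ℝ)..1,
            ⟪v, Matrix.toEuclideanLin Ψᵀ (f (Matrix.toEuclideanLin Ψ (z k τ)))⟫_ℝ := by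
            apply intervalIntegral.integral_congr
            intro τ _
            beta_reduce
            exact real_inner_comm _ _
        _ = ⟪v, IF⟫_ℝ := h
        _ = ⟪IF, v⟫_ℝ := real_inner_comm _ _
    -- assemble energy difference
    have hEdiff : E (Matrix.toEuclideanLin Ψ (u (k + 1))) - E (Matrix.toEuclideanLin Ψ (u k))
        = -(Δt⁻¹ * ‖v‖ ^ 2) + ⟪ID, v⟫_ℝ := by
      rw [hE, hE, hQ, hQ]
      have hN2 : N (Matrix.toEuclideanLin Ψ (u (k + 1))) - N (Matrix.toEuclideanLin Ψ (u k))
          = ⟪IF, v⟫_ℝ := hNdiff.trans hIFinner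
      have hIFsplit : ⟪IF, v⟫_ℝ = ⟪-(Δt⁻¹ • v) + ID, v⟫_ℝ
          - ⟪(1 / 2 : ℝ) • Matrix.toEuclideanLin Ar (u (k + 1) + u k), v⟫_ℝ := by
        rw [show (-(Δt⁻¹ • v) + ID : EuclideanSpace ℝ (Fin Nr))
            = ((1 / 2 : ℝ) • Matrix.toEuclideanLin Ar (u (k + 1) + u k) + IG) + ID
            by rw [hkey]]
        rw [hFDG]
        simp only [inner_add_left]
        ring
      have hhalf : ⟪(1 / 2 : ℝ) • Matrix.toEuclideanLin Ar (u (k + 1) + u k), v⟫_ℝ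
          = (1 / 2) * (⟪u (k + 1), Matrix.toEuclideanLin Ar (u (k + 1))⟫_ℝ
            - ⟪u k, Matrix.toEuclideanLin Ar (u k)⟫_ℝ) := by
        rw [real_inner_smul_left, hquad]
      have hrest : ⟪-(Δt⁻¹ • v) + ID, v⟫_ℝ = -(Δt⁻¹ * ‖v‖ ^ 2) + ⟪ID, v⟫_ℝ := by
        rw [inner_add_left, inner_neg_left, real_inner_smul_left,
          real_inner_self_eq_norm_sq]
      rw [hIFsplit, hhalf, hrest] at hN2
      linarith
    -- bound the DEIM error integral
    have hIDbound : ‖ID‖ ≤ spectralNorm2 R⁻¹ * C := by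
      have h := intervalIntegral.norm_integral_le_of_norm_le_const
        (a := (0:ℝ)) (b := 1) (C := spectralNorm2 R⁻¹ * C)
        (f := fun τ : ℝ => Matrix.toEuclideanLin Ψᵀ (f (Matrix.toEuclideanLin Ψ (z k τ))
          - g (Matrix.toEuclideanLin Ψ (z k τ)))) ?_
      · rw [hID]; simpa using h
      · intro τ hτ
        have hτ' : τ ∈ Set.Icc (0:ℝ) 1 := by
          rw [Set.uIoc_of_le (by norm_num : (0:ℝ) ≤ 1)] at hτ
          exact Set.Ioc_subset_Icc_self hτ
        calc ‖Matrix.toEuclideanLin Ψᵀ (f (Matrix.toEuclideanLin Ψ (z k τ))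
            - g (Matrix.toEuclideanLin Ψ (z k τ)))‖
            ≤ spectralNorm2 R⁻¹ * ‖f (Matrix.toEuclideanLin Ψ (z k τ))
              - g (Matrix.toEuclideanLin Ψ (z k τ))‖ := hPsiTbound _
          _ ≤ spectralNorm2 R⁻¹ * C :=
            mul_le_mul_of_nonneg_left (hbound k hk τ hτ') (le_of_lt hspos)
    -- step size bound
    have hκ : 0 < spectralNorm2 R⁻¹ * C := mul_pos hspos hC
    have hinf_le : Δt * (spectralNorm2 R⁻¹ * C) ≤ ‖v‖ := by
      have h1 : Δt * (spectralNorm2 R⁻¹ * C) ≤ ⨅ n : Fin J, ‖u (n + 1) - u n‖ :=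
        (le_div_iff₀ hκ).mp hstepsize
      have hbb : BddBelow (Set.range fun n : Fin J => ‖u (↑n + 1) - u ↑n‖) := by
        refine ⟨0, ?_⟩
        rintro x ⟨i, rfl⟩
        exact norm_nonneg _
      have h2 : (⨅ n : Fin J, ‖u (↑n + 1) - u ↑n‖) ≤ ‖u (k + 1) - u k‖ :=
        ciInf_le hbb ⟨k, hk⟩
      rw [hv]
      exact h1.trans h2
    -- conclude
    have hvnn := norm_nonneg v
    have hIv : ⟪ID, v⟫_ℝ ≤ spectralNorm2 R⁻¹ * C * ‖v‖ :=
      (real_inner_le_norm _ _).trans (mul_le_mul_of_nonneg_right hIDbound hvnn)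
    have hneg : E (Matrix.toEuclideanLin Ψ (u (k + 1)))
        - E (Matrix.toEuclideanLin Ψ (u k)) ≤ 0 := by
      rw [hEdiff]
      have hΔinv : 0 < Δt⁻¹ := inv_pos.mpr hΔt
      nlinarith [mul_le_mul_of_nonneg_right hinf_le hvnn,
        inv_mul_cancel₀ (ne_of_gt hΔt)]
    linarith
  exact step

/-- Global time-step condition for energy stability of the DEIM reduced
order model: with symmetric stiffness matrix `A`, discrete energy `E u = (1/2)⟪u, Au⟫ + N u`
with `f = ∇N`, mass matrix `M = Rᵀ R` (`R` invertible), `M`-orthonormal basis matrix `Ψ`,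
reduced stiffness matrix `A_r = Ψᵀ A Ψ`, DEIM approximation `ĝ` of `f`, and a sequence
`(u_rⁿ)` of DEIM-reduced AVF steps whose DEIM errors are uniformly bounded by `C > 0`, if
`Δt ≤ (min_{n<J} ‖u_r^{n+1} - u_rⁿ‖₂) / (‖R⁻¹‖₂ C)` then the reduced energy sequence is
nonincreasing: `E (Ψ u_rⁿ) ≤ E (Ψ u_rᵐ)` for all `m ≤ n ≤ J`. -/
theorem deim_rom_global_energy_stability {𝒩 Nr : ℕ}
    (A : Matrix (Fin 𝒩) (Fin 𝒩) ℝ) (hA : A.IsSymm)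
    (N : EuclideanSpace ℝ (Fin 𝒩) → ℝ)
    (f : EuclideanSpace ℝ (Fin 𝒩) → EuclideanSpace ℝ (Fin 𝒩))
    (hN : ∀ u, HasGradientAt N (f u) u) (hf : Continuous f)
    (E : EuclideanSpace ℝ (Fin 𝒩) → ℝ)
    (hE : ∀ u : EuclideanSpace ℝ (Fin 𝒩),
      E u = (1 / 2) * ⟪u, Matrix.toEuclideanLin A u⟫_ℝ + N u)
    (R : Matrix (Fin 𝒩) (Fin 𝒩) ℝ) (hR : IsUnit R)
    (M : Matrix (Fin 𝒩) (Fin 𝒩) ℝ) (hM : M = Rᵀ * R)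
    (Ψ : Matrix (Fin 𝒩) (Fin Nr) ℝ) (hΨ : Ψᵀ * M * Ψ = 1)
    (Ar : Matrix (Fin Nr) (Fin Nr) ℝ) (hAr : Ar = Ψᵀ * A * Ψ)
    (g : EuclideanSpace ℝ (Fin 𝒩) → EuclideanSpace ℝ (Fin 𝒩)) (hg : Continuous g)
    (Δt : ℝ) (hΔt : 0 < Δt) (J : ℕ) (u : ℕ → EuclideanSpace ℝ (Fin Nr))
    (z : ℕ → ℝ → EuclideanSpace ℝ (Fin Nr))
    (hz : ∀ n τ, z n τ = τ • u (n + 1) + (1 - τ) • u n)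
    (hstep : ∀ n < J, (u (n + 1) - u n)
        + (Δt / 2) • Matrix.toEuclideanLin Ar (u (n + 1) + u n)
        + Δt • (∫ τ in (0:ℝ)..1,
            Matrix.toEuclideanLin Ψᵀ (g (Matrix.toEuclideanLin Ψ (z n τ)))) = 0)
    (C : ℝ) (hC : 0 < C)
    (hbound : ∀ n < J, ∀ τ ∈ Set.Icc (0:ℝ) 1,
      ‖f (Matrix.toEuclideanLin Ψ (z n τ)) - g (Matrix.toEuclideanLin Ψ (z n τ))‖ ≤ C)
    (hstepsize : Δt ≤ (⨅ n : Fin J, ‖u (n + 1) - u n‖) / (spectralNorm2 R⁻¹ * C)) :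
    ∀ m n : ℕ, m ≤ n → n ≤ J → E (Matrix.toEuclideanLin Ψ (u n))
        ≤ E (Matrix.toEuclideanLin Ψ (u m)) := by
  rcases Nat.eq_zero_or_pos 𝒩 with h𝒩 | h𝒩
  · subst h𝒩
    haveI : Subsingleton (EuclideanSpace ℝ (Fin 0)) :=
      ⟨fun x y => PiLp.ext (fun i => i.elim0)⟩
    intro m n _ _
    exact le_of_eq (congrArg E (Subsingleton.elim _ _))
  · have step := DeimAux.deim_step A hA N f hN hf E hE R hR M hM Ψ hΨ Ar hAr g hg
      Δt hΔt J u z hz hstep C hC hbound hstepsize h𝒩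
    intro m n hmn
    induction n, hmn using Nat.le_induction with
    | base => intro _; exact le_rfl
    | succ n hmn ih =>
      intro hn
      have hnJ : n < J := lt_of_lt_of_le (Nat.lt_succ_self n) hn
      exact (step n hnJ).trans (ih (le_of_lt hnJ))
end
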